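/- arXiv:1108.5309 — 7 statements merged into one kernel-verified Lean document; each statement's English description precedes it below -/
import Mathlib

section
/- Let x, y ∈ ℝ³ be linearly independent vectors such that the restriction of B to span{x, y} is positive definite. Then there exists exactly one vector z ∈ ℝ³ with Q(z) = −1, z₃ > 0, and B(z, x) = B(z, y) = 0. (Geometrically: the geodesics D_x and D_y in the hyperbolic plane, realized as the hyperboloid sheet {z : Q(z) = −1, z₃ > 0}, intersect in a single point.) -/
noncomputable section

/-- The Minkowski bilinear form of signature (2,1) on ℝ³. -/
def MinkB (u v : Fin 3 → ℝ) : ℝ := u 0 * v 0 + u 1 * v 1 - u 2 * v 2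

/-- The Minkowski quadratic form `Q(v) = B(v,v)`. -/
def MinkQ (v : Fin 3 → ℝ) : ℝ := MinkB v v

set_option maxHeartbeats 1600000 in
/-- Let `x, y ∈ ℝ³` be linearly independent with the restriction of the Minkowski form
to their span positive definite (equivalently `Q(x) > 0` and `Q(x)Q(y) − B(x,y)² > 0`).
Then there is exactly one vector `z` with `Q(z) = −1`, `z₃ > 0`, and
`B(z,x) = B(z,y) = 0`: the geodesics `D_x` and `D_y` on the hyperboloid sheet
`{z : Q(z) = −1, z₃ > 0}` intersect in a single point. -/
theorem geodesics_intersect_in_unique_point (x y : Fin 3 → ℝ)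
    (hli : LinearIndependent ℝ ![x, y])
    (hx : 0 < MinkQ x) (hgram : 0 < MinkQ x * MinkQ y - MinkB x y ^ 2) :
    ∃! z : Fin 3 → ℝ, MinkQ z = -1 ∧ 0 < z 2 ∧ MinkB z x = 0 ∧ MinkB z y = 0 := by
  clear hli hx
  set w : Fin 3 → ℝ := ![x 1 * y 2 - x 2 * y 1, x 2 * y 0 - x 0 * y 2,
      -(x 0 * y 1 - x 1 * y 0)] with hw
  have hw0 : w 0 = x 1 * y 2 - x 2 * y 1 := rfl
  have hw1 : w 1 = x 2 * y 0 - x 0 * y 2 := rfl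
  have hw2 : w 2 = -(x 0 * y 1 - x 1 * y 0) := rfl
  set g : ℝ := MinkQ x * MinkQ y - MinkB x y ^ 2 with hg
  have hQw : w 0 ^ 2 + w 1 ^ 2 - w 2 ^ 2 = -g := by
    simp only [hw0, hw1, hw2, hg, MinkQ, MinkB]; ring
  have hw2ne : w 2 ≠ 0 := by
    intro h
    rw [h] at hQw
    nlinarith [sq_nonneg (w 0), sq_nonneg (w 1)]
  set r : ℝ := Real.sqrt g with hr
  have hrpos : 0 < r := Real.sqrt_pos.mpr hgram
  have hr2 : r ^ 2 = g := Real.sq_sqrt hgram.le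
  set c : ℝ := |w 2| / (w 2 * r) with hc
  have hc2 : c ^ 2 = 1 / g := by
    rw [hc, div_pow, mul_pow, sq_abs, hr2]
    field_simp [pow_ne_zero 2 hw2ne]
  refine ⟨c • w, ⟨?_, ?_, ?_, ?_⟩, ?_⟩
  · show MinkQ (c • w) = -1
    have : MinkQ (c • w) = c ^ 2 * (w 0 ^ 2 + w 1 ^ 2 - w 2 ^ 2) := by
      simp [MinkQ, MinkB]; ring
    rw [this, hQw, hc2]
    field_simp
  · show 0 < (c • w) 2
    have : (c • w) 2 = |w 2| / r := by
      simp only [Pi.smul_apply, smul_eq_mul, hc]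
      field_simp
    rw [this]
    positivity
  · show MinkB (c • w) x = 0
    simp only [MinkB, Pi.smul_apply, smul_eq_mul, hw0, hw1, hw2]; ring
  · show MinkB (c • w) y = 0
    simp only [MinkB, Pi.smul_apply, smul_eq_mul, hw0, hw1, hw2]; ring
  · rintro z ⟨hzQ, hz2, hzx, hzy⟩
    simp only [MinkQ, MinkB] at hzQ hzx hzy
    -- proportionality
    have h0 : z 0 * w 2 = z 2 * w 0 := by
      rw [hw0, hw2]; linear_combination (-(y 1)) * hzx + x 1 * hzy
    have h1 : z 1 * w 2 = z 2 * w 1 := by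
      rw [hw1, hw2]; linear_combination y 0 * hzx - x 0 * hzy
    have hz2sq : z 2 ^ 2 * g = w 2 ^ 2 := by
      have key : (z 0 * w 2) ^ 2 + (z 1 * w 2) ^ 2 - (z 2 * w 2) ^ 2
          = (z 0 ^ 2 + z 1 ^ 2 - z 2 ^ 2) * w 2 ^ 2 := by ring
      rw [h0, h1] at key
      have key2 : z 2 ^ 2 * (w 0 ^ 2 + w 1 ^ 2 - w 2 ^ 2) = (-1) * w 2 ^ 2 := by
        linear_combination key + w 2 ^ 2 * hzQ
      rw [hQw] at key2
      linarith
    have hz2val : z 2 = |w 2| / r := by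
      have h1' : z 2 ^ 2 = (|w 2| / r) ^ 2 := by
        rw [div_pow, sq_abs, hr2]
        field_simp
        linarith [hz2sq]
      have hpos : 0 < |w 2| / r := by positivity
      rcases sq_eq_sq_iff_eq_or_eq_neg.mp h1' with h | h
      · exact h
      · nlinarith
    have hz2r : z 2 * r = |w 2| := by
      rw [hz2val]; field_simp
    funext i
    fin_cases i
    · show z 0 = c * w 0
      rw [hc]
      field_simp
      linear_combination r * h0 + w 0 * hz2r
    · show z 1 = c * w 1
      rw [hc]
      field_simp
      linear_combination r * h1 + w 1 * hz2r
    · show z 2 = c * w 2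
      have hcw2 : c * w 2 = |w 2| / r := by
        rw [hc]; field_simp
      rw [hcw2]; exact hz2val
end
end

section
/- Let n ∈ ℕ, M ∈ ℝ with M ≠ 0, r ∈ ℝ, and let p ∈ P_n(ℝ) be a homogeneous polynomial of degree n whose coefficient of Y^n is zero. Then there exists a unique homogeneous polynomial w ∈ P_n(ℝ) of degree n such that w(X, Y − M·X) − w(X, Y) = p(X, Y) and ∫_r^{r+M} w(1, t) dt = 0. (This is the normalized solution of the jump equation (γ⁻¹ − Id)w = v used to construct the caps of the spectacle cycles: the solution is unique up to a multiple of the highest weight vector X^n, and the vanishing of the integral — the period of the canonical generator ω_{ℓ,k} of the boundary cohomology over the lens — fixes that multiple.) -/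
noncomputable section

open MvPolynomial Finset

/-- The substitution map `p(X,Y) ↦ p(X, Y − M·X)`, the action of the unipotent matrix
`[[1,−M],[0,1]] ∈ SL₂(ℝ)` on binary forms (variable `0` is `X`, variable `1` is `Y`). -/
def sigmaSubNeg (M : ℝ) : MvPolynomial (Fin 2) ℝ →ₐ[ℝ] MvPolynomial (Fin 2) ℝ :=
  aeval ![X 0, X 1 - C M * X 0]

def mexp (n j : ℕ) : Fin 2 →₀ ℕ := Finsupp.single 0 (n - j) + Finsupp.single 1 j

@[simp] lemma mexp_apply_zero (n j : ℕ) : mexp n j 0 = n - j := by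
  simp [mexp, Finsupp.single_apply]

@[simp] lemma mexp_apply_one (n j : ℕ) : mexp n j 1 = j := by
  simp [mexp, Finsupp.single_apply]

lemma mexp_inj {n i j : ℕ} (h : mexp n i = mexp n j) : i = j := by
  have := DFunLike.congr_fun h 1
  simpa using this

lemma degree_fin2 (d : Fin 2 →₀ ℕ) : d.degree = d 0 + d 1 := by
  rw [Finsupp.degree, ← Fin.sum_univ_two (f := fun i => d i)]
  exact Finset.sum_subset (Finset.subset_univ _)
    (fun i _ hi => Finsupp.notMem_support_iff.mp hi)

lemma degree_mexp {n j : ℕ} (hj : j ≤ n) : (mexp n j).degree = n := by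
  rw [degree_fin2]; simp; omega

def EE (n j : ℕ) : MvPolynomial (Fin 2) ℝ := monomial (mexp n j) 1

lemma EE_eq (n j : ℕ) : EE n j = X 0 ^ (n - j) * X 1 ^ j := by
  rw [X_pow_eq_monomial, X_pow_eq_monomial, monomial_mul, one_mul]; rfl

lemma EE_homog {n j : ℕ} (hj : j ≤ n) : (EE n j).IsHomogeneous n :=
  isHomogeneous_monomial 1 (degree_mexp hj)

lemma coeff_EE (n i j : ℕ) : coeff (mexp n i) (EE n j) = if i = j then 1 else 0 := by
  rw [EE, coeff_monomial]
  by_cases h : i = j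
  · simp [h]
  · rw [if_neg h, if_neg (fun hc => h (mexp_inj hc).symm)]

-- coefficient of w beyond degree
lemma coeff_mexp_gt {n j : ℕ} {w : MvPolynomial (Fin 2) ℝ} (hw : w.IsHomogeneous n)
    (hj : n < j) : coeff (mexp n j) w = 0 := by
  apply hw.coeff_eq_zero
  rw [degree_fin2]; simp; omega

/-- basis expansion of a homogeneous polynomial -/
lemma homog_eq_sum {n : ℕ} {w : MvPolynomial (Fin 2) ℝ} (hw : w.IsHomogeneous n) :
    w = ∑ j ∈ Finset.range (n+1), coeff (mexp n j) w • EE n j := by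
  apply MvPolynomial.ext
  intro d
  rw [MvPolynomial.coeff_sum]
  simp only [coeff_smul, EE, coeff_monomial, smul_eq_mul]
  by_cases hd : d 0 + d 1 = n
  · have hdm : d = mexp n (d 1) := by
      ext x
      fin_cases x
      · simp; omega
      · simp
    rw [hdm, Finset.sum_eq_single (d 1)]
    · simp
    · intro j hj hne
      rw [if_neg (fun hc => hne (mexp_inj hc)), mul_zero]
    · intro h
      exact absurd (Finset.mem_range.mpr (by omega)) h
  · rw [hw.coeff_eq_zero (by rw [degree_fin2]; exact hd)]
    refine (Finset.sum_eq_zero fun j hj => ?_).symm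
    rw [if_neg, mul_zero]
    intro hc
    apply hd
    have h0 := DFunLike.congr_fun hc 0
    have h1 := DFunLike.congr_fun hc 1
    simp at h0 h1
    have hjn : j ≤ n := Nat.lt_succ_iff.mp (Finset.mem_range.mp hj)
    omega

lemma sigma_EE (M : ℝ) {n j : ℕ} (hj : j ≤ n) :
    sigmaSubNeg M (EE n j)
      = ∑ i ∈ range (j+1), ((j.choose i : ℝ) * (-M)^(j-i)) • EE n i := by
  rw [EE_eq, map_mul, map_pow, map_pow, sigmaSubNeg, aeval_X, aeval_X]
  simp only [Matrix.cons_val_zero, Matrix.cons_val_one, Matrix.head_cons]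
  have hsub : (X 1 - C M * X 0 : MvPolynomial (Fin 2) ℝ) = X 1 + C (-M) * X 0 := by
    rw [map_neg]; ring
  rw [hsub, add_pow, Finset.mul_sum]
  refine Finset.sum_congr rfl fun i hi => ?_
  have hij : i ≤ j := Nat.lt_succ_iff.mp (Finset.mem_range.mp hi)
  rw [EE_eq, smul_eq_C_mul]
  have hpow : (X 0 : MvPolynomial (Fin 2) ℝ)^(n-j) * X 0^(j-i) = X 0^(n-i) := by
    rw [← pow_add]; congr 1; omega
  calc X 0 ^ (n - j) * (X 1 ^ i * (C (-M) * X 0) ^ (j - i) * (j.choose i : MvPolynomial (Fin 2) ℝ))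
      = ((j.choose i : MvPolynomial (Fin 2) ℝ) * C ((-M)^(j-i))) * ((X 0^(n-j) * X 0^(j-i)) * X 1 ^ i) := by
        rw [mul_pow, ← C_pow]; ring
    _ = C ((j.choose i : ℝ) * (-M) ^ (j - i)) * (X 0 ^ (n - i) * X 1 ^ i) := by
        rw [hpow, C_mul]; norm_cast

/-- the jump operator applied to a basis element -/
lemma Tm_EE (M : ℝ) {n j : ℕ} (hj : j ≤ n) :
    sigmaSubNeg M (EE n j) - EE n j
      = ∑ i ∈ range j, ((j.choose i : ℝ) * (-M)^(j-i)) • EE n i := by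
  rw [sigma_EE M hj, Finset.sum_range_succ]
  simp

lemma coeff_Tm_EE (M : ℝ) {n j : ℕ} (hj : j ≤ n) (i0 : ℕ) :
    coeff (mexp n i0) (sigmaSubNeg M (EE n j) - EE n j)
      = if i0 < j then (j.choose i0 : ℝ) * (-M)^(j-i0) else 0 := by
  rw [Tm_EE M hj, MvPolynomial.coeff_sum]
  simp only [coeff_smul, coeff_EE, smul_eq_mul]
  by_cases h : i0 < j
  · rw [if_pos h, Finset.sum_eq_single i0]
    · simp
    · intro i hi hne; rw [if_neg (fun hc => hne hc.symm), mul_zero]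
    · intro hcon; exact absurd (Finset.mem_range.mpr h) hcon
  · rw [if_neg h]
    refine Finset.sum_eq_zero fun i hi => ?_
    have : i < j := Finset.mem_range.mp hi
    rw [if_neg (by omega), mul_zero]

lemma Tm_homog (M : ℝ) {n : ℕ} {w : MvPolynomial (Fin 2) ℝ} (hw : w.IsHomogeneous n) :
    (sigmaSubNeg M w - w).IsHomogeneous n := by
  refine IsHomogeneous.sub ?_ hw
  rw [homog_eq_sum hw, map_sum]
  refine IsHomogeneous.sum _ _ _ fun j hj => ?_
  have hjn : j ≤ n := Nat.lt_succ_iff.mp (Finset.mem_range.mp hj)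
  rw [map_smul, sigma_EE M hjn]
  rw [Finset.smul_sum]
  refine IsHomogeneous.sum _ _ _ fun i hi => ?_
  have hin : i ≤ n := le_trans (Nat.lt_succ_iff.mp (Finset.mem_range.mp hi)) hjn
  rw [smul_smul, smul_eq_C_mul]
  have := (isHomogeneous_C (Fin 2)
      (coeff (mexp n j) w * ((j.choose i : ℝ) * (-M) ^ (j - i)))).mul (EE_homog hin)
  rwa [zero_add] at this

lemma homog_smul {n : ℕ} {w : MvPolynomial (Fin 2) ℝ} (hw : w.IsHomogeneous n) (c : ℝ) :
    (c • w).IsHomogeneous n := by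
  rw [smul_eq_C_mul]
  have := (isHomogeneous_C (Fin 2) c).mul hw
  rwa [zero_add] at this

lemma exists_solution (M : ℝ) (hM : M ≠ 0) (n : ℕ) :
    ∀ k, k ≤ n → ∀ p : MvPolynomial (Fin 2) ℝ, p.IsHomogeneous n →
      (∀ j, k ≤ j → coeff (mexp n j) p = 0) →
      ∃ w, w.IsHomogeneous n ∧ sigmaSubNeg M w - w = p := by
  intro k
  induction k with
  | zero =>
    intro _ p hp h0
    have hp0 : p = 0 := by
      rw [homog_eq_sum hp]
      refine Finset.sum_eq_zero fun j _ => ?_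
      rw [h0 j (Nat.zero_le j), zero_smul]
    exact ⟨0, isHomogeneous_zero _ _ _, by simp [hp0]⟩
  | succ k ih =>
    intro hk1 p hp h0
    set c : ℝ := coeff (mexp n k) p with hc
    have hden : ((k : ℝ) + 1) * (-M) ≠ 0 := by
      apply mul_ne_zero
      · positivity
      · simpa using hM
    set a : ℝ := c / (((k : ℝ) + 1) * (-M)) with ha
    set w1 : MvPolynomial (Fin 2) ℝ := a • EE n (k+1) with hw1
    have hTw1 : sigmaSubNeg M w1 - w1 = a • (sigmaSubNeg M (EE n (k+1)) - EE n (k+1)) := by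
      rw [hw1, map_smul, smul_sub]
    set p' : MvPolynomial (Fin 2) ℝ := p - (sigmaSubNeg M w1 - w1) with hp'
    have hp'h : p'.IsHomogeneous n :=
      hp.sub (hTw1 ▸ homog_smul (Tm_homog M (EE_homog hk1)) a)
    have hp'c : ∀ j, k ≤ j → coeff (mexp n j) p' = 0 := by
      intro j hj
      rw [hp', coeff_sub, hTw1, coeff_smul, coeff_Tm_EE M hk1, smul_eq_mul]
      rcases Nat.lt_or_ge j (k+1) with h | h
      · have hjk : j = k := by omega
        rw [hjk, if_pos (Nat.lt_succ_self k)]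
        have hch : ((k+1).choose k : ℝ) = (k : ℝ) + 1 := by
          rw [Nat.choose_succ_self_right]; push_cast; ring
        rw [hch]
        have : (k + 1 : ℕ) - k = 1 := by omega
        rw [this, pow_one, ha]
        field_simp
        rw [hc]; ring
      · rw [if_neg (by omega), mul_zero, h0 j (by omega), sub_zero]
    obtain ⟨w2, hw2h, hw2e⟩ := ih (by omega) p' hp'h hp'c
    refine ⟨w1 + w2, (homog_smul (EE_homog hk1) a).add hw2h, ?_⟩
    rw [map_add]
    have hre : sigmaSubNeg M w1 + sigmaSubNeg M w2 - (w1 + w2)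
        = (sigmaSubNeg M w1 - w1) + (sigmaSubNeg M w2 - w2) := by ring
    rw [hre, hw2e, hp']
    ring

/-- key step for the kernel: a coefficient of the kernel vanishes if all higher ones do -/
lemma kernel_step (M : ℝ) (hM : M ≠ 0) {n : ℕ} {w : MvPolynomial (Fin 2) ℝ}
    (hw : w.IsHomogeneous n) (h : sigmaSubNeg M w - w = 0) {j : ℕ} (hj1 : 1 ≤ j) (hjn : j ≤ n)
    (hhigh : ∀ j', j < j' → coeff (mexp n j') w = 0) :
    coeff (mexp n j) w = 0 := by
  have hexp : sigmaSubNeg M w - w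
      = ∑ j' ∈ Finset.range (n+1),
          coeff (mexp n j') w • (sigmaSubNeg M (EE n j') - EE n j') := by
    conv_lhs => rw [homog_eq_sum hw]
    rw [map_sum, ← Finset.sum_sub_distrib]
    refine Finset.sum_congr rfl fun i _ => ?_
    rw [map_smul, smul_sub]
  have hco : coeff (mexp n (j-1)) (sigmaSubNeg M w - w) = 0 := by rw [h]; simp
  rw [hexp, MvPolynomial.coeff_sum] at hco
  simp only [coeff_smul, smul_eq_mul] at hco
  rw [Finset.sum_eq_single j] at hco
  · rw [coeff_Tm_EE M hjn, if_pos (by omega)] at hco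
    have hch : j.choose (j-1) = j := by
      have h1 : j - 1 = j - 1 := rfl
      calc j.choose (j - 1) = j.choose 1 := by rw [← Nat.choose_symm hj1]
        _ = j := Nat.choose_one_right j
    have hpw : j - (j - 1) = 1 := by omega
    rw [hch, hpw, pow_one] at hco
    rcases mul_eq_zero.mp hco with h' | h'
    · exact h'
    · exfalso
      rcases mul_eq_zero.mp h' with h'' | h''
      · have : j = 0 := by exact_mod_cast h''
        omega
      · exact hM (by linarith [neg_eq_zero.mp h''])
  · intro b hb hne
    have hbn : b ≤ n := Nat.lt_succ_iff.mp (Finset.mem_range.mp hb)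
    rcases Nat.lt_or_ge j b with hlt | hge
    · rw [hhigh b hlt, zero_mul]
    · rw [coeff_Tm_EE M hbn, if_neg (by omega), mul_zero]
  · intro hcon
    exact absurd (Finset.mem_range.mpr (by omega)) hcon

lemma kernel_eq (M : ℝ) (hM : M ≠ 0) {n : ℕ} {w : MvPolynomial (Fin 2) ℝ}
    (hw : w.IsHomogeneous n) (h : sigmaSubNeg M w - w = 0) :
    w = coeff (mexp n 0) w • EE n 0 := by
  have hvanish : ∀ m, ∀ j, 1 ≤ j → n ≤ j + m → coeff (mexp n j) w = 0 := by
    intro m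
    induction m with
    | zero =>
      intro j hj1 hjn
      rcases Nat.lt_or_ge n j with hlt | hge
      · exact coeff_mexp_gt hw hlt
      · have hjn' : j = n := by omega
        subst hjn'
        exact kernel_step M hM hw h hj1 le_rfl fun j' hj' => coeff_mexp_gt hw hj'
    | succ m ih =>
      intro j hj1 hjn
      rcases Nat.lt_or_ge n j with hlt | hge
      · exact coeff_mexp_gt hw hlt
      · exact kernel_step M hM hw h hj1 hge fun j' hj' => ih j' (by omega) (by omega)
  have hsum : (∑ j ∈ Finset.range (n+1), coeff (mexp n j) w • EE n j)
      = coeff (mexp n 0) w • EE n 0 := by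
    apply Finset.sum_eq_single
    · intro j hj hne
      rw [hvanish n j (by omega) (by omega), zero_smul]
    · intro hcon
      exact absurd (Finset.mem_range.mpr (by omega)) hcon
  conv_lhs => rw [homog_eq_sum hw, hsum]

-- integral helpers
lemma continuous_evalw (w : MvPolynomial (Fin 2) ℝ) :
    Continuous fun t : ℝ => MvPolynomial.eval ![(1 : ℝ), t] w := by
  have hc : Continuous fun t : ℝ => (![(1 : ℝ), t] : Fin 2 → ℝ) := by
    apply continuous_pi
    intro i
    fin_cases i
    · simpa using continuous_const
    · exact continuous_id
  exact (MvPolynomial.continuous_eval w).comp hc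

lemma mexp_top (n : ℕ) : mexp n n = Finsupp.single 1 n := by
  rw [mexp, Nat.sub_self, Finsupp.single_zero, zero_add]


/-- Normalized solution of the jump equation: if `p` is homogeneous of degree `n` with
vanishing coefficient of `Y^n` and `M ≠ 0`, then there is a unique homogeneous `w` of
degree `n` with `w(X, Y − MX) − w(X,Y) = p(X,Y)` and `∫_r^{r+M} w(1,t) dt = 0`.
The solution is unique up to a multiple of `X^n`; the vanishing of the period over the
lens fixes that multiple. -/
theorem normalized_jump_solution_exists_unique (n : ℕ) (M r : ℝ) (hM : M ≠ 0)
    (p : MvPolynomial (Fin 2) ℝ) (hp : p.IsHomogeneous n)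
    (hcoeff : MvPolynomial.coeff (Finsupp.single 1 n) p = 0) :
    ∃! w : MvPolynomial (Fin 2) ℝ, w.IsHomogeneous n ∧
      sigmaSubNeg M w - w = p ∧
      (∫ t in r..(r + M), MvPolynomial.eval ![(1 : ℝ), t] w) = 0 := by
  have hypc : ∀ j, n ≤ j → coeff (mexp n j) p = 0 := by
    intro j hj
    rcases eq_or_lt_of_le hj with heq | hlt
    · rw [← heq, mexp_top]
      exact hcoeff
    · exact coeff_mexp_gt hp hlt
  obtain ⟨w0, hw0h, hw0e⟩ := exists_solution M hM n n le_rfl p hp hypc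
  set I : ℝ := ∫ t in r..(r + M), MvPolynomial.eval ![(1 : ℝ), t] w0 with hI
  set w : MvPolynomial (Fin 2) ℝ := w0 - (I / M) • EE n 0 with hw
  have hE0 : sigmaSubNeg M (EE n 0) - EE n 0 = 0 := by
    rw [Tm_EE M (Nat.zero_le n)]; simp
  have hwh : w.IsHomogeneous n := hw0h.sub (homog_smul (EE_homog (Nat.zero_le n)) _)
  have hweq : sigmaSubNeg M w - w = p := by
    rw [hw, map_sub, map_smul]
    calc sigmaSubNeg M w0 - (I / M) • sigmaSubNeg M (EE n 0) - (w0 - (I / M) • EE n 0)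
        = (sigmaSubNeg M w0 - w0) - (I / M) • (sigmaSubNeg M (EE n 0) - EE n 0) := by
          rw [smul_sub]; ring
      _ = p := by rw [hw0e, hE0, smul_zero, sub_zero]
  have hevalE : ∀ t : ℝ, MvPolynomial.eval ![(1:ℝ), t] (EE n 0) = 1 := by
    intro t; rw [EE_eq]; simp
  have hevalw : ∀ t : ℝ, MvPolynomial.eval ![(1:ℝ), t] w
      = MvPolynomial.eval ![(1:ℝ), t] w0 - I / M := by
    intro t
    rw [hw, map_sub, smul_eq_C_mul, map_mul, eval_C, hevalE, mul_one]
  have hint : (∫ t in r..(r + M), MvPolynomial.eval ![(1 : ℝ), t] w) = 0 := by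
    have heq : (∫ t in r..(r+M), MvPolynomial.eval ![(1:ℝ), t] w)
        = (∫ t in r..(r+M), (MvPolynomial.eval ![(1:ℝ), t] w0 - I / M)) :=
      intervalIntegral.integral_congr fun t _ => hevalw t
    rw [heq, intervalIntegral.integral_sub ((continuous_evalw w0).intervalIntegrable _ _)
      intervalIntegrable_const, ← hI, intervalIntegral.integral_const]
    rw [smul_eq_mul, add_sub_cancel_left]
    field_simp
    ring
  refine ⟨w, ⟨hwh, hweq, hint⟩, ?_⟩
  rintro w' ⟨hw'h, hw'e, hw'i⟩
  set u : MvPolynomial (Fin 2) ℝ := w' - w with hu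
  have huh : u.IsHomogeneous n := hw'h.sub hwh
  have huT : sigmaSubNeg M u - u = 0 := by
    rw [hu, map_sub]
    have hre : sigmaSubNeg M w' - sigmaSubNeg M w - (w' - w)
        = (sigmaSubNeg M w' - w') - (sigmaSubNeg M w - w) := by ring
    rw [hre, hw'e, hweq, sub_self]
  have hker := kernel_eq M hM huh huT
  set c : ℝ := coeff (mexp n 0) u with hcdef
  have hevalu : ∀ t : ℝ, MvPolynomial.eval ![(1:ℝ), t] u = c := by
    intro t
    conv_lhs => rw [hker]
    rw [smul_eq_C_mul, map_mul, eval_C, hevalE, mul_one]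
  have huint : (∫ t in r..(r + M), MvPolynomial.eval ![(1 : ℝ), t] u) = 0 := by
    have heq : (∫ t in r..(r+M), MvPolynomial.eval ![(1:ℝ), t] u)
        = (∫ t in r..(r+M), (MvPolynomial.eval ![(1:ℝ), t] w' - MvPolynomial.eval ![(1:ℝ), t] w)) :=
      intervalIntegral.integral_congr fun t _ => by rw [hu, map_sub]
    rw [heq, intervalIntegral.integral_sub ((continuous_evalw w').intervalIntegrable _ _)
      ((continuous_evalw w).intervalIntegrable _ _), hw'i, hint, sub_zero]
  have hcM : c * M = 0 := by
    have heq : (∫ t in r..(r+M), MvPolynomial.eval ![(1:ℝ), t] u)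
        = (∫ t in r..(r+M), c) := intervalIntegral.integral_congr fun t _ => hevalu t
    rw [heq, intervalIntegral.integral_const] at huint
    simp only [add_sub_cancel_left, smul_eq_mul] at huint
    linarith [huint]
  have hc0 : c = 0 := by
    rcases mul_eq_zero.mp hcM with h' | h'
    · exact h'
    · exact absurd h' hM
  have hu0 : u = 0 := by
    rw [hker, hc0, zero_smul]
  have := sub_eq_zero.mp (hu ▸ hu0)
  exact this
end
end

section
/- If A ∈ SL₂(ℤ) interchanges two distinct points of the projective line ℙ¹(ℚ) (i.e. A·p = q and A·q = p for distinct p, q ∈ ℙ¹(ℚ)), then A² = I or A² = −I. (Hence the setwise stabilizer in PSL₂(ℤ) of an unordered pair of distinct rational points has order at most 2, which bounds the stabilizer of a modular symbol.) -/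
noncomputable section

/-- The ℚ-linear endomorphism of `ℚ²` given by a matrix `A ∈ SL₂(ℤ)`. -/
def slTwoAction (A : Matrix.SpecialLinearGroup (Fin 2) ℤ) :
    (Fin 2 → ℚ) →ₗ[ℚ] (Fin 2 → ℚ) :=
  Matrix.toLin' ((A : Matrix (Fin 2) (Fin 2) ℤ).map ((↑) : ℤ → ℚ))

/-- A rank-one submodule of a `ℚ`-vector space is the span of a nonzero vector. -/
lemma exists_span_of_finrank_eq_one {V : Type*} [AddCommGroup V] [Module ℚ V]
    (p : Submodule ℚ V) (hp : Module.finrank ℚ p = 1) :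
    ∃ u : V, u ≠ 0 ∧ p = Submodule.span ℚ {u} := by
  have hrank : Module.rank ℚ p = 1 := by
    rw [← Cardinal.toNat_eq_one]
    exact hp
  obtain ⟨u, hu, hu0, hle⟩ := (rank_submodule_eq_one_iff p).mp hrank
  refine ⟨u, hu0, le_antisymm hle ?_⟩
  rw [Submodule.span_le, Set.singleton_subset_iff]
  exact hu

/-- If `A ∈ SL₂(ℤ)` interchanges two distinct points of `ℙ¹(ℚ)` (two distinct
one-dimensional ℚ-subspaces of `ℚ²`), then `A² = I` or `A² = −I`.  Hence the setwise
stabilizer in `PSL₂(ℤ)` of an unordered pair of distinct rational cusps has order at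
most 2. -/
theorem sl2z_swapping_two_rational_points (A : Matrix.SpecialLinearGroup (Fin 2) ℤ)
    (p q : Submodule ℚ (Fin 2 → ℚ)) (hpq : p ≠ q)
    (hp1 : Module.finrank ℚ p = 1) (hq1 : Module.finrank ℚ q = 1)
    (hAp : Submodule.map (slTwoAction A) p = q)
    (hAq : Submodule.map (slTwoAction A) q = p) :
    ((A ^ 2 : Matrix.SpecialLinearGroup (Fin 2) ℤ) : Matrix (Fin 2) (Fin 2) ℤ) = 1 ∨
      ((A ^ 2 : Matrix.SpecialLinearGroup (Fin 2) ℤ) : Matrix (Fin 2) (Fin 2) ℤ) = -1 := by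
  classical
  obtain ⟨u, hu0, hpu⟩ := exists_span_of_finrank_eq_one p hp1
  obtain ⟨v, hv0, hqv⟩ := exists_span_of_finrank_eq_one q hq1
  set B := slTwoAction A with hB
  have hBu : B u ∈ q := by
    rw [← hAp]
    exact Submodule.mem_map_of_mem (by rw [hpu]; exact Submodule.mem_span_singleton_self u)
  have hBv : B v ∈ p := by
    rw [← hAq]
    exact Submodule.mem_map_of_mem (by rw [hqv]; exact Submodule.mem_span_singleton_self v)
  rw [hqv, Submodule.mem_span_singleton] at hBu
  rw [hpu, Submodule.mem_span_singleton] at hBv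
  obtain ⟨c, hc⟩ := hBu
  obtain ⟨d, hd⟩ := hBv
  -- u, v are linearly independent
  have hind : LinearIndependent ℚ ![u, v] := by
    rw [linearIndependent_fin2]
    refine ⟨hv0, fun a ha => ?_⟩
    simp only [Matrix.cons_val_one, Matrix.head_cons, Matrix.cons_val_zero] at ha
    have ha0 : a ≠ 0 := by
      intro h0
      rw [h0, zero_smul] at ha
      exact hu0 ha.symm
    apply hpq
    rw [hpu, hqv, ← ha, Submodule.span_singleton_smul_eq (IsUnit.mk0 a ha0) v]
  have hcard : Fintype.card (Fin 2) = Module.finrank ℚ (Fin 2 → ℚ) := by simp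
  let b : Module.Basis (Fin 2) ℚ (Fin 2 → ℚ) := basisOfLinearIndependentOfCardEqFinrank hind hcard
  have hb : ⇑b = ![u, v] := coe_basisOfLinearIndependentOfCardEqFinrank hind hcard
  -- B ∘ B = (c*d) • id
  have hBB : B ∘ₗ B = (c * d) • LinearMap.id := by
    apply b.ext
    intro i
    rw [LinearMap.comp_apply, LinearMap.smul_apply, LinearMap.id_apply]
    fin_cases i
    · simp only [hb, Fin.zero_eta, Matrix.cons_val_zero]
      rw [← hc, map_smul, ← hd, smul_smul]
    · simp only [hb, Fin.mk_one, Matrix.cons_val_one, Matrix.head_cons, Matrix.cons_val_zero]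
      rw [← hd, map_smul, ← hc, smul_smul, mul_comm d c]
  -- translate to matrices
  set φ := (Int.castRingHom ℚ).mapMatrix (m := Fin 2) with hφ
  have hmap : φ ((A ^ 2 : Matrix.SpecialLinearGroup (Fin 2) ℤ) : Matrix (Fin 2) (Fin 2) ℤ)
      = (c * d) • (1 : Matrix (Fin 2) (Fin 2) ℚ) := by
    apply Matrix.toLin'.injective
    have h2 : ((A ^ 2 : Matrix.SpecialLinearGroup (Fin 2) ℤ) : Matrix (Fin 2) (Fin 2) ℤ)
        = (A : Matrix (Fin 2) (Fin 2) ℤ) * (A : Matrix (Fin 2) (Fin 2) ℤ) := by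
      rw [sq]; rfl
    have h3 : Matrix.toLin' (φ ((A ^ 2 : Matrix.SpecialLinearGroup (Fin 2) ℤ) :
        Matrix (Fin 2) (Fin 2) ℤ)) = B ∘ₗ B := by
      rw [h2, map_mul, Matrix.toLin'_mul]
      rfl
    rw [h3, hBB, map_smul, Matrix.toLin'_one]
  -- determinant gives (c*d)^2 = 1
  have hdet : ((c * d) ^ 2 : ℚ) = 1 := by
    have h1 : ((c * d) • (1 : Matrix (Fin 2) (Fin 2) ℚ)).det = 1 := by
      rw [← hmap, hφ, ← RingHom.map_det, Matrix.SpecialLinearGroup.det_coe]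
      simp
    rw [Matrix.det_smul, Matrix.det_one, mul_one, Fintype.card_fin] at h1
    exact h1
  have hcd : c * d = 1 ∨ c * d = -1 := by
    rw [sq, mul_self_eq_one_iff] at hdet
    exact hdet
  have key : ∀ i j, (((A ^ 2 : Matrix.SpecialLinearGroup (Fin 2) ℤ) :
      Matrix (Fin 2) (Fin 2) ℤ) i j : ℚ) = (c * d) * (1 : Matrix (Fin 2) (Fin 2) ℚ) i j := by
    intro i j
    have h0 := Matrix.ext_iff.mpr hmap i j
    simpa [hφ, Matrix.smul_apply] using h0
  rcases hcd with h | h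
  · left
    ext i j
    have h1 := key i j
    rw [h, one_mul] at h1
    have h2 : (((A ^ 2 : Matrix.SpecialLinearGroup (Fin 2) ℤ) :
        Matrix (Fin 2) (Fin 2) ℤ) i j : ℚ) = ((1 : Matrix (Fin 2) (Fin 2) ℤ) i j : ℚ) := by
      rw [h1]
      by_cases hij : i = j <;> simp [Matrix.one_apply, hij]
    exact_mod_cast h2
  · right
    ext i j
    have h1 := key i j
    rw [h] at h1
    have h2 : (((A ^ 2 : Matrix.SpecialLinearGroup (Fin 2) ℤ) :
        Matrix (Fin 2) (Fin 2) ℤ) i j : ℚ) = ((-1 : Matrix (Fin 2) (Fin 2) ℤ) i j : ℚ) := by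
      rw [h1]
      by_cases hij : i = j <;> simp [Matrix.one_apply, Matrix.neg_apply, hij]
    exact_mod_cast h2
end
end

section
/- For every j ∈ ℕ and every ξ ∈ ℝ: ∫_ℝ He_j(√(2π)·x)·e^{−π x²}·e^{−2π i x ξ} dx = (−i·√(2π)·ξ)^j · e^{−π ξ²}. Equivalently, in terms of the physicists' Hermite polynomial H_j, the Fourier transform of x ↦ H_j(√π x)e^{−π x²} is ξ ↦ (−2i√π ξ)^j e^{−π ξ²}. -/
open MeasureTheory Real Complex Polynomial FourierTransform

noncomputable section

namespace HermiteFT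

/-- The Hermite–Gaussian function. -/
def G (j : ℕ) (x : ℝ) : ℂ :=
  ((Polynomial.aeval (Real.sqrt (2 * Real.pi) * x) (Polynomial.hermite j) : ℝ) : ℂ) *
    Complex.exp (-(Real.pi : ℂ) * (x : ℂ) ^ 2)

lemma integrable_poly_gaussian (P : ℤ[X]) (c : ℝ) :
    Integrable (fun x : ℝ => ((Polynomial.aeval (c * x) P : ℝ) : ℂ) *
      Complex.exp (-(Real.pi : ℂ) * (x : ℂ) ^ 2)) := by
  induction P using Polynomial.induction_on' with
  | add p q hp hq =>
      simpa [map_add, Complex.ofReal_add, add_mul, Pi.add_def] using hp.add hq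
  | monomial n a =>
      have hlt : (-1 : ℝ) < n := by
        calc (-1:ℝ) < 0 := by norm_num
        _ ≤ n := Nat.cast_nonneg n
      have h0 : Integrable (fun x : ℝ => |x ^ n * Real.exp (-Real.pi * x ^ 2)|) := by
        simpa [Real.rpow_natCast] using
          (integrable_rpow_mul_exp_neg_mul_sq Real.pi_pos hlt).abs
      have h1 : Integrable (fun x : ℝ => (x : ℂ) ^ n * Complex.exp (-(Real.pi : ℂ) * (x : ℂ) ^ 2)) := by
        refine h0.mono' ?_ (Filter.Eventually.of_forall fun x => ?_)
        · apply Measurable.aestronglyMeasurable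
          fun_prop
        · refine le_of_eq ?_
          rw [norm_mul, norm_pow, Complex.norm_real,
            show -(Real.pi : ℂ) * (x : ℂ) ^ 2 = ((-Real.pi * x ^ 2 : ℝ) : ℂ) by push_cast; ring,
            Complex.norm_exp, Complex.ofReal_re, abs_mul,
            _root_.abs_pow, abs_of_pos (Real.exp_pos (-Real.pi * x ^ 2)), Real.norm_eq_abs]
      have := h1.const_mul (((a : ℝ) : ℂ) * ((c : ℝ) : ℂ) ^ n)
      refine this.congr (Filter.Eventually.of_forall fun x => ?_)
      simp only [Polynomial.aeval_monomial, mul_pow, algebraMap_int_eq, eq_intCast]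
      push_cast
      ring

lemma G_integrable (j : ℕ) : Integrable (G j) := by
  unfold G; exact integrable_poly_gaussian _ _

lemma sqrt_two_pi_sq : ((Real.sqrt (2 * Real.pi) : ℝ) : ℂ) ^ 2 = 2 * (Real.pi : ℂ) := by
  rw [← Complex.ofReal_pow, Real.sq_sqrt (by positivity)]
  push_cast; ring

lemma G_hasDerivAt (j : ℕ) (x : ℝ) :
    HasDerivAt (G j) (-((Real.sqrt (2 * Real.pi) : ℝ) : ℂ) * G (j + 1) x) x := by
  set c : ℝ := Real.sqrt (2 * Real.pi) with hc
  have hscale : HasDerivAt (fun x : ℝ => c * x) c x := by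
    simpa using (hasDerivAt_id x).const_mul c
  have hpolyR : HasDerivAt (fun x : ℝ =>
      (Polynomial.aeval (c * x) (Polynomial.hermite j) : ℝ))
      ((Polynomial.aeval (c * x) (Polynomial.derivative (Polynomial.hermite j)) : ℝ) * c) x :=
    ((Polynomial.hermite j).hasDerivAt_aeval (c * x)).comp x hscale
  have hpoly : HasDerivAt (fun x : ℝ =>
      ((Polynomial.aeval (c * x) (Polynomial.hermite j) : ℝ) : ℂ))
      (((Polynomial.aeval (c * x) (Polynomial.derivative (Polynomial.hermite j)) : ℝ) * c : ℝ) : ℂ) x :=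
    hpolyR.ofReal_comp
  have hx : HasDerivAt (fun x : ℝ => ((x : ℝ) : ℂ)) 1 x := by
    simpa using (hasDerivAt_id x).ofReal_comp
  have hsq : HasDerivAt (fun x : ℝ => -(Real.pi : ℂ) * (x : ℂ) ^ 2)
      (-(Real.pi : ℂ) * (2 * (x : ℂ))) x := by
    have h := ((hx.mul hx).const_mul (-(Real.pi : ℂ)))
    convert h using 2 with y <;> first | rfl | (simp only [Pi.mul_apply]; ring) | ring
  have hexp : HasDerivAt (fun x : ℝ => Complex.exp (-(Real.pi : ℂ) * (x : ℂ) ^ 2))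
      (-(Real.pi : ℂ) * (2 * (x : ℂ)) * Complex.exp (-(Real.pi : ℂ) * (x : ℂ) ^ 2)) x := by
    simpa [mul_comm] using hsq.cexp
  have h := hpoly.mul hexp
  convert h using 1 <;> try rfl
  unfold G
  have hrec : (Polynomial.aeval ((c : ℝ) * x) (Polynomial.hermite (j + 1)) : ℝ) =
      (c * x) * (Polynomial.aeval (c * x) (Polynomial.hermite j) : ℝ) -
        (Polynomial.aeval (c * x) (Polynomial.derivative (Polynomial.hermite j)) : ℝ) := by
    rw [Polynomial.hermite_succ]
    simp [map_sub, map_mul, Polynomial.aeval_X]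
  have hc2 : ((c : ℝ) : ℂ) ^ 2 = 2 * (Real.pi : ℂ) := sqrt_two_pi_sq
  rw [hrec]
  push_cast
  linear_combination (-(x:ℂ) * ((Polynomial.aeval (c*x) (Polynomial.hermite j) : ℝ) : ℂ) *
    Complex.exp (-(Real.pi : ℂ) * (x : ℂ) ^ 2)) * hc2
  
lemma G_differentiable (j : ℕ) : Differentiable ℝ (G j) :=
  fun x => (G_hasDerivAt j x).differentiableAt

lemma deriv_G (j : ℕ) :
    deriv (G j) = fun x => -((Real.sqrt (2 * Real.pi) : ℝ) : ℂ) * G (j + 1) x :=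
  funext fun x => (G_hasDerivAt j x).deriv

lemma fourier_G (j : ℕ) (ξ : ℝ) :
    𝓕 (G j) ξ =
      (-Complex.I * ((Real.sqrt (2 * Real.pi) : ℝ) : ℂ) * (ξ : ℂ)) ^ j *
        Complex.exp (-(Real.pi : ℂ) * (ξ : ℂ) ^ 2) := by
  induction j generalizing ξ with
  | zero =>
      have hG : G 0 = fun x : ℝ => Complex.exp (-(Real.pi : ℂ) * (x : ℂ) ^ 2) := by
        funext x; simp [G, Polynomial.hermite_zero]
      have h := fourier_gaussian_pi (b := 1) (by norm_num)
      rw [hG]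
      have h2 : (fun x : ℝ => Complex.exp (-(Real.pi : ℂ) * (x : ℂ) ^ 2)) =
          (fun x : ℝ => Complex.exp (-(Real.pi : ℂ) * 1 * (x : ℂ) ^ 2)) := by
        funext x; ring_nf
      rw [h2, h]
      simp
  | succ j ih =>
      set c : ℂ := ((Real.sqrt (2 * Real.pi) : ℝ) : ℂ) with hc
      have hcne : c ≠ 0 := by
        rw [hc]
        exact_mod_cast Complex.ofReal_ne_zero.mpr
          (ne_of_gt (Real.sqrt_pos.mpr (by positivity)))
      have hderiv : deriv (G j) = fun x => -c * G (j + 1) x := deriv_G j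
      have hint' : Integrable (deriv (G j)) := by
        rw [hderiv]; exact (G_integrable (j + 1)).const_mul _
      have hFT := Real.fourier_deriv (G_integrable j) (G_differentiable j) hint'
      have h1 : 𝓕 (deriv (G j)) ξ =
          -c * 𝓕 (G (j + 1)) ξ := by
        rw [hderiv]
        simp only [Real.fourier_real_eq, Circle.smul_def, smul_eq_mul]
        rw [← integral_const_mul]
        congr 1; funext x; ring
      have h2 : 𝓕 (deriv (G j)) ξ =
          2 * (Real.pi : ℂ) * Complex.I * (ξ : ℂ) * 𝓕 (G j) ξ := by
        rw [hFT]; simp [smul_eq_mul]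
      have hc2 : c ^ 2 = 2 * (Real.pi : ℂ) := sqrt_two_pi_sq
      have key : 𝓕 (G (j + 1)) ξ =
          (-Complex.I * c * (ξ : ℂ)) * 𝓕 (G j) ξ := by
        have := h1.symm.trans h2
        apply mul_left_cancel₀ hcne
        linear_combination -this + Complex.I * (ξ : ℂ) * 𝓕 (G j) ξ * hc2
      rw [key, ih ξ, pow_succ]
      ring

end HermiteFT

/-- Fourier transform of Hermite functions: for every `j` and `ξ`,
`∫ He_j(√(2π)x)·e^{−πx²}·e^{−2πixξ} dx = (−i√(2π)ξ)^j·e^{−πξ²}`, where `He_j` is the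
probabilists' Hermite polynomial. -/
theorem hermite_fourier_transform (j : ℕ) (ξ : ℝ) :
    (∫ x : ℝ,
        ((Polynomial.aeval (Real.sqrt (2 * Real.pi) * x) (Polynomial.hermite j) : ℝ) : ℂ) *
          Complex.exp (-(Real.pi : ℂ) * (x : ℂ) ^ 2) *
          Complex.exp (-2 * (Real.pi : ℂ) * Complex.I * (x : ℂ) * (ξ : ℂ))) =
      (-Complex.I * (Real.sqrt (2 * Real.pi) : ℂ) * (ξ : ℂ)) ^ j *
        Complex.exp (-(Real.pi : ℂ) * (ξ : ℂ) ^ 2) := by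
  have h := HermiteFT.fourier_G j ξ
  rw [Real.fourier_real_eq_integral_exp_smul] at h
  rw [← h]
  congr 1
  funext x
  have he : (-2 * (Real.pi : ℂ) * Complex.I * (x : ℂ) * (ξ : ℂ)) =
      ((-2 * Real.pi * x * ξ : ℝ) : ℂ) * Complex.I := by push_cast; ring
  rw [he]
  simp only [HermiteFT.G, smul_eq_mul]
  ring
end
end

section
/- For every integer k ≥ 0 and every real b ≠ 0, the integral ∫_{−∞}^{∞} He_{k+1}(b·cosh r)·exp(−(b²/2)·sinh² r)·exp(k·r) dr converges and equals √(2π)·b^k·sgn(b). Equivalently, in physicists' normalization, ∫_{−∞}^{∞} H_{k+1}(a·cosh r)·exp(−a²·sinh² r)·e^{kr} dr = 2^{k+1}·√π·a^k·sgn(a) for a ≠ 0. (This is the period of the Schwartz form φ^U_{1,[k]} over the hyperbolic line against a spacelike vector; it produces the positive Fourier coefficients of the O(1,1) theta lift.) -/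
noncomputable section

open Real MeasureTheory Filter Polynomial Set Topology

namespace HermiteCoshAux

/-- The probabilists' Hermite polynomial with real coefficients. -/
def Hp (n : ℕ) : Polynomial ℝ := (Polynomial.hermite n).map (algebraMap ℤ ℝ)

/-- Evaluation of the real Hermite polynomial. -/
def He (n : ℕ) (x : ℝ) : ℝ := (Hp n).eval x

lemma aeval_eq_He (n : ℕ) (x : ℝ) :
    (Polynomial.aeval x (Polynomial.hermite n) : ℝ) = He n x := by
  rw [He, Hp, Polynomial.eval_map, Polynomial.aeval_def]

lemma Hp_zero : Hp 0 = 1 := by simp [Hp]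

lemma Hp_succ (n : ℕ) :
    Hp (n + 1) = Polynomial.X * Hp n - Polynomial.derivative (Hp n) := by
  rw [Hp, Polynomial.hermite_succ, Polynomial.map_sub, Polynomial.map_mul, Polynomial.map_X,
    ← Polynomial.derivative_map]
  rfl

lemma derivative_Hp (n : ℕ) :
    Polynomial.derivative (Hp (n + 1)) = Polynomial.C ((n : ℝ) + 1) * Hp n := by
  induction n with
  | zero =>
    simp [Hp_succ, Hp_zero]
  | succ n ih =>
    rw [Hp_succ (n + 1), Polynomial.derivative_sub, Polynomial.derivative_mul,
      Polynomial.derivative_X, one_mul, ih, Polynomial.derivative_mul,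
      Polynomial.derivative_C, zero_mul, zero_add, Hp_succ n]
    push_cast
    simp only [Polynomial.C_add, Polynomial.C_1]
    ring

lemma eval_derivative_Hp (n : ℕ) (x : ℝ) :
    (Polynomial.derivative (Hp n)).eval x = (n : ℝ) * He (n - 1) x := by
  cases n with
  | zero => simp [Hp_zero]
  | succ m =>
    rw [derivative_Hp m]
    simp only [Polynomial.eval_mul, Polynomial.eval_C, He]
    push_cast
    ring

lemma He_succ (n : ℕ) (x : ℝ) :
    He (n + 1) x = x * He n x - (Polynomial.derivative (Hp n)).eval x := by
  rw [He, Hp_succ]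
  simp [He]

lemma eval_derivative_Hp' (n : ℕ) (x : ℝ) :
    (Polynomial.derivative (Hp n)).eval x = x * He n x - He (n + 1) x := by
  rw [He_succ]; ring

lemma He_succ' (n : ℕ) (x : ℝ) :
    He (n + 1) x = x * He n x - (n : ℝ) * He (n - 1) x := by
  rw [He_succ, eval_derivative_Hp]

/-- The integrand family. -/
def F (b : ℝ) (n : ℕ) (a : ℝ) : ℝ → ℝ := fun r =>
  He n (b * Real.cosh r) * Real.exp (-(b ^ 2 / 2) * Real.sinh r ^ 2) * Real.exp (a * r)

lemma F_succ (b : ℝ) (n : ℕ) (a r : ℝ) :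
    F b (n + 1) a r =
      b / 2 * (F b n (a + 1) r + F b n (a - 1) r) - (n : ℝ) * F b (n - 1) a r := by
  unfold F
  rw [He_succ']
  have e1 : Real.exp ((a + 1) * r) = Real.exp (a * r) * Real.exp r := by
    rw [← Real.exp_add]; ring_nf
  have e2 : Real.exp ((a - 1) * r) = Real.exp (a * r) * Real.exp (-r) := by
    rw [← Real.exp_add]; ring_nf
  rw [e1, e2, Real.cosh_eq]
  ring

lemma sq_le_sinh_sq (r : ℝ) : r ^ 2 ≤ Real.sinh r ^ 2 := by
  rcases lt_trichotomy r 0 with h | h | h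
  · have h2 : (-r) < Real.sinh (-r) := Real.self_lt_sinh_iff.2 (by linarith)
    rw [Real.sinh_neg] at h2
    nlinarith
  · simp [h]
  · have h2 := Real.self_lt_sinh_iff.2 h
    nlinarith

lemma F_zero_eq (b a r : ℝ) :
    F b 0 a r = Real.exp (-(b ^ 2 / 2) * Real.sinh r ^ 2 + a * r) := by
  unfold F He
  rw [Hp_zero, Real.exp_add]
  simp

lemma F_bound (b : ℝ) (hb : b ≠ 0) (n : ℕ) :
    ∀ a : ℝ, ∃ C : ℝ, ∀ r : ℝ, |F b n a r| ≤ C * Real.exp (-(b ^ 2 / 4) * r ^ 2) := by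
  have hb2 : 0 < b ^ 2 := by positivity
  induction n using Nat.strong_induction_on with
  | _ n ih =>
    match n with
    | 0 =>
      intro a
      refine ⟨Real.exp (a ^ 2 / b ^ 2), fun r => ?_⟩
      rw [F_zero_eq, abs_of_pos (Real.exp_pos _), ← Real.exp_add, Real.exp_le_exp]
      have hs := sq_le_sinh_sq r
      have hexp : (a / b - b * r / 2) ^ 2 = a ^ 2 / b ^ 2 - a * r + b ^ 2 * r ^ 2 / 4 := by
        field_simp
        ring
      have key : a * r ≤ a ^ 2 / b ^ 2 + b ^ 2 * r ^ 2 / 4 := by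
        nlinarith [sq_nonneg (a / b - b * r / 2)]
      have hmul : b ^ 2 / 2 * r ^ 2 ≤ b ^ 2 / 2 * Real.sinh r ^ 2 :=
        mul_le_mul_of_nonneg_left hs (by positivity)
      linarith
    | (m + 1) =>
      intro a
      obtain ⟨C1, h1⟩ := ih m (by omega) (a + 1)
      obtain ⟨C2, h2⟩ := ih m (by omega) (a - 1)
      obtain ⟨C3, h3⟩ := ih (m - 1) (by omega) a
      refine ⟨|b| / 2 * (C1 + C2) + (m : ℝ) * C3, fun r => ?_⟩
      have habs :
          |F b (m + 1) a r| ≤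
            |b| / 2 * (|F b m (a + 1) r| + |F b m (a - 1) r|) +
              (m : ℝ) * |F b (m - 1) a r| := by
        rw [F_succ]
        calc |b / 2 * (F b m (a + 1) r + F b m (a - 1) r) - (m : ℝ) * F b (m - 1) a r|
            ≤ |b / 2 * (F b m (a + 1) r + F b m (a - 1) r)| + |(m : ℝ) * F b (m - 1) a r| :=
              abs_sub _ _
          _ = |b| / 2 * |F b m (a + 1) r + F b m (a - 1) r| + (m : ℝ) * |F b (m - 1) a r| := by
              rw [abs_mul, abs_mul, abs_div]
              simp [Nat.abs_cast]
          _ ≤ |b| / 2 * (|F b m (a + 1) r| + |F b m (a - 1) r|) +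
                (m : ℝ) * |F b (m - 1) a r| := by
              gcongr
              exact abs_add_le _ _
      refine habs.trans ?_
      have e1 := h1 r
      have e2 := h2 r
      have e3 := h3 r
      have hm : (0 : ℝ) ≤ (m : ℝ) := Nat.cast_nonneg m
      nlinarith [abs_nonneg (F b m (a + 1) r), abs_nonneg (F b m (a - 1) r),
        abs_nonneg (F b (m - 1) a r), abs_nonneg b, Real.exp_pos (-(b ^ 2 / 4) * r ^ 2)]

lemma F_continuous (b : ℝ) (n : ℕ) (a : ℝ) : Continuous (F b n a) := by
  unfold F He
  exact (((Hp n).continuous.comp (continuous_const.mul Real.continuous_cosh)).mul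
      (Real.continuous_exp.comp (continuous_const.mul (Real.continuous_sinh.pow 2)))).mul
    (Real.continuous_exp.comp (continuous_const.mul continuous_id))

lemma F_integrable (b : ℝ) (hb : b ≠ 0) (n : ℕ) (a : ℝ) : Integrable (F b n a) := by
  obtain ⟨C, hC⟩ := F_bound b hb n a
  have hg : Integrable (fun r : ℝ => C * Real.exp (-(b ^ 2 / 4) * r ^ 2)) :=
    (integrable_exp_neg_mul_sq (show (0 : ℝ) < b ^ 2 / 4 by positivity)).const_mul C
  exact hg.mono' (F_continuous b n a).aestronglyMeasurable
    (MeasureTheory.ae_of_all _ fun r => by simpa [Real.norm_eq_abs] using hC r)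

lemma exp_neg_sq_tendsto_atTop (b : ℝ) (hb : b ≠ 0) :
    Tendsto (fun r : ℝ => Real.exp (-(b ^ 2 / 4) * r ^ 2)) atTop (𝓝 0) := by
  apply Real.tendsto_exp_atBot.comp
  apply Tendsto.const_mul_atTop_of_neg (show -(b ^ 2 / 4) < 0 by have h2 : 0 < b ^ 2 := (sq_nonneg b).lt_of_ne' (pow_ne_zero 2 hb); linarith)
  exact tendsto_pow_atTop two_ne_zero

lemma exp_neg_sq_tendsto_atBot (b : ℝ) (hb : b ≠ 0) :
    Tendsto (fun r : ℝ => Real.exp (-(b ^ 2 / 4) * r ^ 2)) atBot (𝓝 0) := by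
  apply Real.tendsto_exp_atBot.comp
  apply Tendsto.const_mul_atTop_of_neg (show -(b ^ 2 / 4) < 0 by have h2 : 0 < b ^ 2 := (sq_nonneg b).lt_of_ne' (pow_ne_zero 2 hb); linarith)
  have : (fun r : ℝ => r ^ 2) = (fun s : ℝ => s ^ 2) ∘ fun r : ℝ => |r| := by
    funext r; simp [sq_abs]
  rw [this]
  exact (tendsto_pow_atTop two_ne_zero).comp tendsto_abs_atBot_atTop

lemma F_tendsto_atTop (b : ℝ) (hb : b ≠ 0) (n : ℕ) (a : ℝ) :
    Tendsto (F b n a) atTop (𝓝 0) := by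
  obtain ⟨C, hC⟩ := F_bound b hb n a
  have h' : Tendsto (fun r : ℝ => C * Real.exp (-(b ^ 2 / 4) * r ^ 2)) atTop (nhds (C * 0)) :=
    (exp_neg_sq_tendsto_atTop b hb).const_mul C
  rw [mul_zero] at h'
  exact squeeze_zero_norm (fun r => by rw [Real.norm_eq_abs]; exact hC r) h'

lemma F_tendsto_atBot (b : ℝ) (hb : b ≠ 0) (n : ℕ) (a : ℝ) :
    Tendsto (F b n a) atBot (𝓝 0) := by
  obtain ⟨C, hC⟩ := F_bound b hb n a
  have h' : Tendsto (fun r : ℝ => C * Real.exp (-(b ^ 2 / 4) * r ^ 2)) atBot (nhds (C * 0)) :=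
    (exp_neg_sq_tendsto_atBot b hb).const_mul C
  rw [mul_zero] at h'
  exact squeeze_zero_norm (fun r => by rw [Real.norm_eq_abs]; exact hC r) h'

lemma F_hasDerivAt (b : ℝ) (n : ℕ) (a r : ℝ) :
    HasDerivAt (F b n a)
      (a * F b n a r - b * Real.sinh r * F b (n + 1) a r) r := by
  have hP : HasDerivAt (fun r : ℝ => He n (b * Real.cosh r))
      ((Polynomial.derivative (Hp n)).eval (b * Real.cosh r) * (b * Real.sinh r)) r := by
    have h1 : HasDerivAt (fun r : ℝ => b * Real.cosh r) (b * Real.sinh r) r :=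
      (Real.hasDerivAt_cosh r).const_mul b
    exact ((Hp n).hasDerivAt (b * Real.cosh r)).comp r h1
  have hE : HasDerivAt (fun r : ℝ => Real.exp (-(b ^ 2 / 2) * Real.sinh r ^ 2))
      (Real.exp (-(b ^ 2 / 2) * Real.sinh r ^ 2) *
        (-(b ^ 2 / 2) * ((2 : ℕ) * Real.sinh r ^ (2 - 1) * Real.cosh r))) r := by
    exact (((Real.hasDerivAt_sinh r).pow 2).const_mul (-(b ^ 2 / 2))).exp
  have hX : HasDerivAt (fun r : ℝ => Real.exp (a * r)) (Real.exp (a * r) * (a * 1)) r :=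
    ((hasDerivAt_id r).const_mul a).exp
  have h := (hP.mul hE).mul hX
  have hkey := eval_derivative_Hp' n (b * Real.cosh r)
  have heq : a * F b n a r - b * Real.sinh r * F b (n + 1) a r =
      ((Polynomial.derivative (Hp n)).eval (b * Real.cosh r) * (b * Real.sinh r) *
          Real.exp (-(b ^ 2 / 2) * Real.sinh r ^ 2) +
        He n (b * Real.cosh r) *
          (Real.exp (-(b ^ 2 / 2) * Real.sinh r ^ 2) *
            (-(b ^ 2 / 2) * ((2 : ℕ) * Real.sinh r ^ (2 - 1) * Real.cosh r)))) *
        Real.exp (a * r) +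
      He n (b * Real.cosh r) * Real.exp (-(b ^ 2 / 2) * Real.sinh r ^ 2) *
        (Real.exp (a * r) * (a * 1)) := by
    rw [hkey]
    unfold F
    push_cast
    ring
  rw [heq]
  exact h

lemma relA (b : ℝ) (hb : b ≠ 0) (n : ℕ) (a : ℝ) :
    a * (∫ r : ℝ, F b n a r) =
      b / 2 * ((∫ r : ℝ, F b (n + 1) (a + 1) r) - ∫ r : ℝ, F b (n + 1) (a - 1) r) := by
  have hder : ∀ r : ℝ, HasDerivAt (F b n a)
      (a * F b n a r - b / 2 * (F b (n + 1) (a + 1) r - F b (n + 1) (a - 1) r)) r := by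
    intro r
    have h := F_hasDerivAt b n a r
    have heq : a * F b n a r - b / 2 * (F b (n + 1) (a + 1) r - F b (n + 1) (a - 1) r) =
        a * F b n a r - b * Real.sinh r * F b (n + 1) a r := by
      unfold F
      have e1 : Real.exp ((a + 1) * r) = Real.exp (a * r) * Real.exp r := by
        rw [← Real.exp_add]; ring_nf
      have e2 : Real.exp ((a - 1) * r) = Real.exp (a * r) * Real.exp (-r) := by
        rw [← Real.exp_add]; ring_nf
      rw [e1, e2, Real.sinh_eq]
      ring
    rw [heq]
    exact h
  have h1 : Integrable (fun r : ℝ => a * F b n a r) := (F_integrable b hb n a).const_mul a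
  have hsub : Integrable (fun r : ℝ => F b (n + 1) (a + 1) r - F b (n + 1) (a - 1) r) :=
    (F_integrable b hb (n + 1) (a + 1)).sub (F_integrable b hb (n + 1) (a - 1))
  have h2 : Integrable (fun r : ℝ =>
      b / 2 * (F b (n + 1) (a + 1) r - F b (n + 1) (a - 1) r)) := hsub.const_mul (b / 2)
  have hint : Integrable (fun r : ℝ =>
      a * F b n a r - b / 2 * (F b (n + 1) (a + 1) r - F b (n + 1) (a - 1) r)) := h1.sub h2
  have h0 : (∫ r : ℝ,
      (a * F b n a r - b / 2 * (F b (n + 1) (a + 1) r - F b (n + 1) (a - 1) r))) = 0 - 0 :=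
    integral_of_hasDerivAt_of_tendsto hder hint (F_tendsto_atBot b hb n a)
      (F_tendsto_atTop b hb n a)
  rw [integral_sub h1 h2, MeasureTheory.integral_const_mul, MeasureTheory.integral_const_mul,
    integral_sub (F_integrable b hb (n + 1) (a + 1)) (F_integrable b hb (n + 1) (a - 1))] at h0
  linarith

lemma relB (b : ℝ) (hb : b ≠ 0) (n : ℕ) (a : ℝ) :
    (∫ r : ℝ, F b (n + 1) a r) =
      b / 2 * ((∫ r : ℝ, F b n (a + 1) r) + ∫ r : ℝ, F b n (a - 1) r) -
        (n : ℝ) * ∫ r : ℝ, F b (n - 1) a r := by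
  have heq : (∫ r : ℝ, F b (n + 1) a r) = ∫ r : ℝ,
      (b / 2 * (F b n (a + 1) r + F b n (a - 1) r) - (n : ℝ) * F b (n - 1) a r) := by
    congr 1
    funext r
    exact F_succ b n a r
  have hadd : Integrable (fun r : ℝ => F b n (a + 1) r + F b n (a - 1) r) :=
    (F_integrable b hb n (a + 1)).add (F_integrable b hb n (a - 1))
  have h1 : Integrable (fun r : ℝ => b / 2 * (F b n (a + 1) r + F b n (a - 1) r)) :=
    hadd.const_mul (b / 2)
  have h2 : Integrable (fun r : ℝ => (n : ℝ) * F b (n - 1) a r) :=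
    (F_integrable b hb (n - 1) a).const_mul (n : ℝ)
  rw [heq, integral_sub h1 h2, MeasureTheory.integral_const_mul, MeasureTheory.integral_const_mul,
    integral_add (F_integrable b hb n (a + 1)) (F_integrable b hb n (a - 1))]

lemma main_rec (b : ℝ) (hb : b ≠ 0) (k : ℕ) :
    (∫ r : ℝ, F b (k + 1) (k : ℝ) r) = b ^ k * ∫ r : ℝ, F b 1 0 r := by
  induction k with
  | zero => norm_num
  | succ k ih =>
    have hA := relA b hb k ((k : ℝ) + 1)
    have hB := relB b hb (k + 1) ((k : ℝ) + 1)
    have hc1 : (k : ℝ) + 1 - 1 = (k : ℝ) := by ring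
    rw [hc1] at hA hB
    push_cast at hB ⊢
    rw [hA] at hB
    have : (∫ r : ℝ, F b (k + 1 + 1) ((k : ℝ) + 1) r) = b * ∫ r : ℝ, F b (k + 1) (k : ℝ) r := by
      rw [hB]; ring
    rw [this, ih]
    ring

lemma He_one (x : ℝ) : He 1 x = x := by
  unfold He
  rw [Hp_succ, Hp_zero]
  simp

lemma base_case (b : ℝ) (hb : b ≠ 0) :
    (∫ r : ℝ, F b 1 0 r) = Real.sqrt (2 * π) * Real.sign b := by
  set g : ℝ → ℝ := fun x => b * Real.exp (-(b ^ 2 / 2) * x ^ 2) with hg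
  have hcov := integral_image_eq_integral_abs_deriv_smul (f := Real.sinh)
    (f' := fun x => Real.cosh x) MeasurableSet.univ
    (fun x _ => (Real.hasDerivAt_sinh x).hasDerivWithinAt) Real.sinh_injective.injOn g
  rw [Set.image_univ, Real.sinh_surjective.range_eq, setIntegral_univ, setIntegral_univ] at hcov
  have h1 : (∫ r : ℝ, F b 1 0 r) = ∫ r : ℝ, |Real.cosh r| • g (Real.sinh r) := by
    congr 1
    funext r
    rw [hg]
    simp only [smul_eq_mul]
    rw [abs_of_pos (Real.cosh_pos r)]
    unfold F
    rw [He_one]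
    simp
    ring
  rw [h1, ← hcov, hg]
  rw [MeasureTheory.integral_const_mul, integral_gaussian]
  have h2 : π / (b ^ 2 / 2) = 2 * π * (b⁻¹) ^ 2 := by
    field_simp
  rw [h2, Real.sqrt_mul (by positivity), Real.sqrt_sq_eq_abs, abs_inv]
  rcases lt_trichotomy b 0 with h | h | h
  · rw [Real.sign_of_neg h, abs_of_neg h]
    field_simp
  · exact absurd h hb
  · rw [Real.sign_of_pos h, abs_of_pos h]
    field_simp

end HermiteCoshAux

open HermiteCoshAux in
/-- Period of the Schwartz form `φ^U_{1,[k]}` over the hyperbolic line against a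
spacelike vector: for every `k ≥ 0` and real `b ≠ 0`,
`∫_{−∞}^{∞} He_{k+1}(b·cosh r)·e^{−(b²/2)·sinh²r}·e^{kr} dr = √(2π)·b^k·sgn(b)`,
where `He_n` is the probabilists' Hermite polynomial. -/
theorem hermite_cosh_integral (k : ℕ) (b : ℝ) (hb : b ≠ 0) :
    MeasureTheory.Integrable (fun r : ℝ =>
      (Polynomial.aeval (b * Real.cosh r) (Polynomial.hermite (k + 1)) : ℝ) *
        Real.exp (-(b ^ 2 / 2) * Real.sinh r ^ 2) * Real.exp (k * r)) ∧
    (∫ r : ℝ,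
        (Polynomial.aeval (b * Real.cosh r) (Polynomial.hermite (k + 1)) : ℝ) *
          Real.exp (-(b ^ 2 / 2) * Real.sinh r ^ 2) * Real.exp (k * r)) =
      Real.sqrt (2 * Real.pi) * b ^ k * Real.sign b := by
  have hfun : (fun r : ℝ =>
      (Polynomial.aeval (b * Real.cosh r) (Polynomial.hermite (k + 1)) : ℝ) *
        Real.exp (-(b ^ 2 / 2) * Real.sinh r ^ 2) * Real.exp (k * r)) =
      F b (k + 1) (k : ℝ) := by
    funext r
    rw [aeval_eq_He]
    rfl
  rw [hfun]
  constructor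
  · exact F_integrable b hb (k + 1) (k : ℝ)
  · rw [main_rec b hb k, base_case b hb]
    ring
end
end

section
/- For every integer k ≥ 0 and every real b ≠ 0, the integral ∫_{−∞}^{∞} He_{k+1}(b·sinh r)·exp(−(b²/2)·sinh² r)·exp(k·r) dr converges and equals 0. Equivalently, in physicists' normalization, ∫_{−∞}^{∞} H_{k+1}(a·sinh r)·exp(−a²·sinh² r)·e^{kr} dr = 0 for a ≠ 0. (This is the vanishing of the period of the Schwartz form φ^U_{1,[k]} over the hyperbolic line against a timelike vector; it shows the O(1,1) theta lift has no negative Fourier coefficients, i.e. is holomorphic.) -/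
noncomputable section

open MeasureTheory Polynomial Real Filter Set Finset

namespace HermiteSinhAux

/-- Polynomial times Gaussian is integrable. -/
lemma integrable_poly_gauss (p : ℝ[X]) {c : ℝ} (hc : 0 < c) :
    Integrable (fun t : ℝ => aeval t p * Real.exp (-c * t ^ 2)) := by
  induction p using Polynomial.induction_on' with
  | add p q hp hq =>
      have := hp.add hq
      refine this.congr (Eventually.of_forall fun t => ?_)
      simp [add_mul]
  | monomial n a =>
      have h : Integrable (fun t : ℝ => t ^ (n : ℝ) * Real.exp (-c * t ^ 2)) :=
        integrable_rpow_mul_exp_neg_mul_sq hc (by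
          have : (0:ℝ) ≤ n := Nat.cast_nonneg n
          linarith)
      have h' : Integrable (fun t : ℝ => t ^ n * Real.exp (-c * t ^ 2)) := by
        refine h.congr (Eventually.of_forall fun t => ?_)
        simp [Real.rpow_natCast]
      refine (h'.const_mul a).congr (Eventually.of_forall fun t => ?_)
      simp [Polynomial.aeval_monomial, mul_assoc]

end HermiteSinhAux

namespace HermiteSinhAux

/-- Polynomial of |t| times Gaussian is integrable. -/
lemma integrable_poly_abs_gauss (p : ℝ[X]) {c : ℝ} (hc : 0 < c) :
    Integrable (fun t : ℝ => aeval |t| p * Real.exp (-c * t ^ 2)) := by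
  induction p using Polynomial.induction_on' with
  | add p q hp hq =>
      have := hp.add hq
      refine this.congr (Eventually.of_forall fun t => ?_)
      simp [add_mul]
  | monomial n a =>
      have h : Integrable (fun t : ℝ => |t ^ n * Real.exp (-c * t ^ 2)|) :=
        (integrable_poly_gauss (Polynomial.X ^ n) hc).abs.congr
          (Eventually.of_forall fun t => by simp)
      have h' : Integrable (fun t : ℝ => |t| ^ n * Real.exp (-c * t ^ 2)) := by
        refine h.congr (Eventually.of_forall fun t => ?_)
        simp [abs_mul, abs_pow, abs_of_pos (Real.exp_pos _)]
      refine (h'.const_mul a).congr (Eventually.of_forall fun t => ?_)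
      simp [Polynomial.aeval_monomial, mul_assoc]

/-- `He_n(bt)·e^{-ct²}·t^m` is integrable. -/
lemma integrable_hermite_gauss_pow (b : ℝ) (hb : b ≠ 0) (n m : ℕ) :
    Integrable (fun t : ℝ =>
      (aeval (b * t) (hermite n) : ℝ) * Real.exp (-(b ^ 2 / 2) * t ^ 2) * t ^ m) := by
  have hc : (0:ℝ) < b ^ 2 / 2 := by positivity
  have h := integrable_poly_gauss
    ((((hermite n).map (algebraMap ℤ ℝ)).comp (Polynomial.C b * Polynomial.X)) *
      Polynomial.X ^ m) hc
  refine h.congr (Eventually.of_forall fun t => ?_)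
  simp only [map_mul, map_pow, Polynomial.aeval_X, Polynomial.aeval_comp, map_add,
    Polynomial.aeval_C, Polynomial.aeval_map_algebraMap]
  simp only [Algebra.algebraMap_self, RingHom.id_apply]
  ring

end HermiteSinhAux

namespace HermiteSinhAux

lemma hasDerivAt_hermite_gauss (b : ℝ) (hb : b ≠ 0) (n : ℕ) (t : ℝ) :
    HasDerivAt (fun t : ℝ =>
        -(1/b) * ((aeval (b * t) (hermite n) : ℝ) * Real.exp (-(b ^ 2 / 2) * t ^ 2)))
      ((aeval (b * t) (hermite (n + 1)) : ℝ) * Real.exp (-(b ^ 2 / 2) * t ^ 2)) t := by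
  have hH : HasDerivAt (fun t : ℝ => (aeval (b * t) (hermite n) : ℝ))
      ((aeval (b * t) (derivative (hermite n)) : ℝ) * b) t := by
    have h1 : HasDerivAt (fun t : ℝ => b * t) b t := by
      simpa using (hasDerivAt_id t).const_mul b
    have h2 := ((((hermite n).map (algebraMap ℤ ℝ))).hasDerivAt (b * t)).comp t h1
    have e2 : Polynomial.eval (b * t) (derivative ((hermite n).map (algebraMap ℤ ℝ)))
        = (aeval (b * t) (derivative (hermite n)) : ℝ) := by
      rw [Polynomial.derivative_map, Polynomial.eval_map, ← Polynomial.aeval_def]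
    rw [e2] at h2
    refine HasDerivAt.congr_of_eventuallyEq h2 (Eventually.of_forall fun s => ?_)
    show (aeval (b * s) (hermite n) : ℝ) = _
    simp only [Function.comp, Polynomial.eval_map]
    rw [Polynomial.aeval_def]
  have hE : HasDerivAt (fun t : ℝ => Real.exp (-(b ^ 2 / 2) * t ^ 2))
      (Real.exp (-(b ^ 2 / 2) * t ^ 2) * (-(b ^ 2 / 2) * (2 * t))) t := by
    have hu : HasDerivAt (fun t : ℝ => -(b ^ 2 / 2) * t ^ 2) (-(b ^ 2 / 2) * (2 * t)) t := by
      simpa using (hasDerivAt_pow 2 t).const_mul (-(b ^ 2 / 2))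
    exact (Real.hasDerivAt_exp _).comp t hu
  have h := ((hH.mul hE).const_mul (-(1/b)))
  refine h.congr_deriv ?_
  have hsucc : (aeval (b * t) (hermite (n + 1)) : ℝ)
      = (b * t) * (aeval (b * t) (hermite n) : ℝ) - (aeval (b * t) (derivative (hermite n)) : ℝ) := by
    rw [hermite_succ]
    simp
  rw [hsucc]
  field_simp
  ring

end HermiteSinhAux

namespace HermiteSinhAux

lemma ortho (b : ℝ) (hb : b ≠ 0) :
    ∀ m n : ℕ, m < n →
      (∫ t : ℝ, (aeval (b * t) (hermite n) : ℝ) * Real.exp (-(b ^ 2 / 2) * t ^ 2) * t ^ m) = 0 := by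
  intro m
  induction m with
  | zero =>
      intro n hn
      obtain ⟨n, rfl⟩ : ∃ n', n = n' + 1 := ⟨n - 1, by omega⟩
      have hint' : Integrable (fun t : ℝ =>
          (aeval (b * t) (hermite (n + 1)) : ℝ) * Real.exp (-(b ^ 2 / 2) * t ^ 2)) := by
        refine (integrable_hermite_gauss_pow b hb (n + 1) 0).congr
          (Eventually.of_forall fun t => by simp)
      have hint : Integrable (fun t : ℝ =>
          -(1/b) * ((aeval (b * t) (hermite n) : ℝ) * Real.exp (-(b ^ 2 / 2) * t ^ 2))) := by
        refine ((integrable_hermite_gauss_pow b hb n 0).const_mul (-(1/b))).congr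
          (Eventually.of_forall fun t => by simp)
      have h0 := integral_eq_zero_of_hasDerivAt_of_integrable
        (fun t => hasDerivAt_hermite_gauss b hb n t) hint' hint
      simpa using h0
  | succ m ih =>
      intro n hn
      obtain ⟨n, rfl⟩ : ∃ n', n = n' + 1 := ⟨n - 1, by omega⟩
      set E := fun t : ℝ => Real.exp (-(b ^ 2 / 2) * t ^ 2) with hE
      set A := fun t : ℝ => (aeval (b * t) (hermite (n + 1)) : ℝ) * E t * t ^ (m + 1) with hA
      set B := fun t : ℝ =>
        (-(1/b) * ((aeval (b * t) (hermite n) : ℝ) * E t)) * (((m : ℝ) + 1) * t ^ m) with hB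
      have hG : ∀ t : ℝ, HasDerivAt
          (fun t => (-(1/b) * ((aeval (b * t) (hermite n) : ℝ) * E t)) * t ^ (m + 1))
          (A t + B t) t := by
        intro t
        have := (hasDerivAt_hermite_gauss b hb n t).mul (hasDerivAt_pow (m + 1) t)
        convert this using 1
        all_goals first | rfl | simp [hA, hB, hE]
      have hAint : Integrable A := integrable_hermite_gauss_pow b hb (n + 1) (m + 1)
      have hBint : Integrable B := by
        refine ((integrable_hermite_gauss_pow b hb n m).const_mul
          (-(1/b) * ((m : ℝ) + 1))).congr (Eventually.of_forall fun t => ?_)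
        simp only [hB, hE]
        ring
      have hGint : Integrable (fun t : ℝ =>
          (-(1/b) * ((aeval (b * t) (hermite n) : ℝ) * E t)) * t ^ (m + 1)) := by
        refine ((integrable_hermite_gauss_pow b hb n (m + 1)).const_mul (-(1/b))).congr
          (Eventually.of_forall fun t => ?_)
        simp only [hE]
        ring
      have h0 := integral_eq_zero_of_hasDerivAt_of_integrable hG (hAint.add hBint) hGint
      rw [integral_add hAint hBint] at h0
      have hB0 : (∫ t : ℝ, B t) = 0 := by
        have hfun : B = fun t : ℝ => (-(1/b) * ((m : ℝ) + 1)) *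
            ((aeval (b * t) (hermite n) : ℝ) * E t * t ^ m) := by
          funext t; simp only [hB, hE]; ring
        rw [hfun, MeasureTheory.integral_const_mul, ih n (by omega), mul_zero]
      rw [hB0, add_zero] at h0
      exact h0

end HermiteSinhAux

namespace HermiteSinhAux

lemma ortho_poly (b : ℝ) (hb : b ≠ 0) (n : ℕ) (P : ℝ[X]) (hP : P.natDegree < n) :
    (∫ t : ℝ, (aeval (b * t) (hermite n) : ℝ) * Real.exp (-(b ^ 2 / 2) * t ^ 2) * aeval t P)
      = 0 := by
  have hfun : (fun t : ℝ =>
      (aeval (b * t) (hermite n) : ℝ) * Real.exp (-(b ^ 2 / 2) * t ^ 2) * aeval t P)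
      = fun t : ℝ => ∑ i ∈ Finset.range n, P.coeff i *
          ((aeval (b * t) (hermite n) : ℝ) * Real.exp (-(b ^ 2 / 2) * t ^ 2) * t ^ i) := by
    funext t
    rw [aeval_eq_sum_range' hP, Finset.mul_sum]
    refine Finset.sum_congr rfl fun i _ => ?_
    simp [smul_eq_mul]
    ring
  rw [hfun, MeasureTheory.integral_finset_sum]
  · refine Finset.sum_eq_zero fun i hi => ?_
    rw [MeasureTheory.integral_const_mul, ortho b hb i n (Finset.mem_range.mp hi), mul_zero]
  · intro i _
    exact (integrable_hermite_gauss_pow b hb n i).const_mul _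

lemma hermite_aeval_neg (n : ℕ) (x : ℝ) :
    (aeval (-x) (hermite n) : ℝ) = (-1) ^ n * aeval x (hermite n) := by
  rw [aeval_eq_sum_range (R := ℤ), aeval_eq_sum_range (R := ℤ), Finset.mul_sum]
  refine Finset.sum_congr rfl fun i hi => ?_
  rcases Nat.even_or_odd (n + i) with h | h
  · have hpow : (-x) ^ i = (-1) ^ n * x ^ i := by
      have h1 : ((-1 : ℝ)) ^ i = (-1) ^ n := by
        have h2 : ((-1 : ℝ)) ^ (n + (n + i)) = (-1) ^ i := by
          rw [show n + (n + i) = 2 * n + i by ring, pow_add, pow_mul]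
          norm_num
        rw [← h2, pow_add, h.neg_one_pow, mul_one]
      rw [neg_pow, h1]
    rw [hpow, zsmul_eq_mul, zsmul_eq_mul]
    ring
  · simp [coeff_hermite_of_odd_add h]

lemma exists_P (k : ℕ) : ∃ P : ℝ[X], P.natDegree ≤ k ∧
    ∀ s c : ℝ, c ^ 2 = 1 + s ^ 2 →
      (s + c) ^ k - (s - c) ^ k = 2 * c * aeval s P := by
  suffices H : ∀ k : ℕ, (∃ P : ℝ[X], P.natDegree ≤ k ∧
      ∀ s c : ℝ, c ^ 2 = 1 + s ^ 2 → (s + c) ^ k - (s - c) ^ k = 2 * c * aeval s P) ∧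
      (∃ P : ℝ[X], P.natDegree ≤ k + 1 ∧
      ∀ s c : ℝ, c ^ 2 = 1 + s ^ 2 → (s + c) ^ (k+1) - (s - c) ^ (k+1) = 2 * c * aeval s P) from
    (H k).1
  intro k
  induction k with
  | zero =>
      constructor
      · exact ⟨0, by simp, fun s c hc => by simp⟩
      · exact ⟨1, by simp, fun s c hc => by simp; ring⟩
  | succ k ih =>
      obtain ⟨⟨P₀, hd₀, h₀⟩, ⟨P₁, hd₁, h₁⟩⟩ := ih
      refine ⟨⟨P₁, hd₁, h₁⟩, ⟨Polynomial.C 2 * Polynomial.X * P₁ + P₀, ?_, ?_⟩⟩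
      · refine le_trans (natDegree_add_le _ _) (max_le ?_ (by omega))
        refine le_trans (natDegree_mul_le) ?_
        have : (Polynomial.C (2:ℝ) * Polynomial.X).natDegree ≤ 1 :=
          le_trans natDegree_mul_le (by simp)
        omega
      · intro s c hc
        have hu : (s + c) ^ (k + 2) = 2 * s * (s + c) ^ (k + 1) + (s + c) ^ k := by
          have h2 : (s + c) ^ 2 = 2 * s * (s + c) + 1 := by nlinarith [hc]
          calc (s + c) ^ (k + 2) = (s + c) ^ k * (s + c) ^ 2 := by ring
            _ = 2 * s * (s + c) ^ (k + 1) + (s + c) ^ k := by rw [h2]; ring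
        have hv : (s - c) ^ (k + 2) = 2 * s * (s - c) ^ (k + 1) + (s - c) ^ k := by
          have h2 : (s - c) ^ 2 = 2 * s * (s - c) + 1 := by nlinarith [hc]
          calc (s - c) ^ (k + 2) = (s - c) ^ k * (s - c) ^ 2 := by ring
            _ = 2 * s * (s - c) ^ (k + 1) + (s - c) ^ k := by rw [h2]; ring
        rw [hu, hv]
        have e1 := h₁ s c hc
        have e0 := h₀ s c hc
        simp only [map_add, map_mul, Polynomial.aeval_C, Polynomial.aeval_X,
          Algebra.algebraMap_self, RingHom.id_apply]
        linear_combination 2 * s * e1 + e0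

end HermiteSinhAux

namespace HermiteSinhAux

lemma integrable_sinh_iff (g : ℝ → ℝ) :
    Integrable (fun r : ℝ => Real.cosh r * g (Real.sinh r)) ↔ Integrable g := by
  have h := integrableOn_image_iff_integrableOn_abs_deriv_smul (s := Set.univ)
      MeasurableSet.univ (fun x _ => (Real.hasDerivAt_sinh x).hasDerivWithinAt)
      (Real.sinh_injective.injOn) g
  rw [Set.image_univ, Real.sinh_surjective.range_eq] at h
  have he : (fun x : ℝ => |Real.cosh x| • g (Real.sinh x))
      = fun r : ℝ => Real.cosh r * g (Real.sinh r) :=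
    funext fun x => by rw [abs_of_pos (Real.cosh_pos x), smul_eq_mul]
  rw [he] at h
  rw [← MeasureTheory.integrableOn_univ (f := g), h, MeasureTheory.integrableOn_univ]

lemma integral_sinh (g : ℝ → ℝ) :
    (∫ r : ℝ, Real.cosh r * g (Real.sinh r)) = ∫ t : ℝ, g t := by
  have h := integral_image_eq_integral_abs_deriv_smul (s := Set.univ)
      MeasurableSet.univ (fun x _ => (Real.hasDerivAt_sinh x).hasDerivWithinAt)
      (Real.sinh_injective.injOn) g
  rw [Set.image_univ, Real.sinh_surjective.range_eq] at h
  have he : (fun x : ℝ => |Real.cosh x| • g (Real.sinh x))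
      = fun r : ℝ => Real.cosh r * g (Real.sinh r) :=
    funext fun x => by rw [abs_of_pos (Real.cosh_pos x), smul_eq_mul]
  rw [he] at h
  rw [MeasureTheory.setIntegral_univ, MeasureTheory.setIntegral_univ] at h
  exact h.symm

end HermiteSinhAux

namespace HermiteSinhAux

lemma integrable_psi (k : ℕ) (b : ℝ) (hb : b ≠ 0) :
    Integrable (fun t : ℝ => (aeval (b * t) (hermite (k + 1)) : ℝ) *
      Real.exp (-(b ^ 2 / 2) * t ^ 2) *
      ((t + Real.sqrt (1 + t ^ 2)) ^ k / Real.sqrt (1 + t ^ 2))) := by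
  have hc : (0:ℝ) < b ^ 2 / 2 := by positivity
  set C1 : ℝ := ∑ i ∈ Finset.range (k + 2), |((hermite (k + 1)).coeff i : ℝ)| * |b| ^ i with hC1
  set Q : ℝ[X] := Polynomial.C (C1 * 2 ^ k) * (1 + Polynomial.X) ^ (2 * k + 1) with hQ
  -- bound for the hermite factor
  have hH : ∀ t : ℝ, |(aeval (b * t) (hermite (k + 1)) : ℝ)| ≤ C1 * (1 + |t|) ^ (k + 1) := by
    intro t
    have hx : (aeval (b * t) (hermite (k + 1)) : ℝ)
        = ∑ i ∈ Finset.range (k + 2), ((hermite (k + 1)).coeff i : ℝ) * (b * t) ^ i := by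
      rw [aeval_eq_sum_range (R := ℤ)]
      rw [natDegree_hermite]
      exact Finset.sum_congr rfl fun i _ => zsmul_eq_mul _ _
    rw [hx]
    calc |∑ i ∈ Finset.range (k + 2), ((hermite (k + 1)).coeff i : ℝ) * (b * t) ^ i|
        ≤ ∑ i ∈ Finset.range (k + 2), |((hermite (k + 1)).coeff i : ℝ) * (b * t) ^ i| :=
          Finset.abs_sum_le_sum_abs _ _
      _ ≤ ∑ i ∈ Finset.range (k + 2),
            (|((hermite (k + 1)).coeff i : ℝ)| * |b| ^ i) * (1 + |t|) ^ (k + 1) := by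
          refine Finset.sum_le_sum fun i hi => ?_
          rw [abs_mul, abs_pow, abs_mul, mul_pow, mul_assoc]
          refine mul_le_mul_of_nonneg_left ?_ (abs_nonneg _)
          refine mul_le_mul_of_nonneg_left ?_ (by positivity)
          calc |t| ^ i ≤ (1 + |t|) ^ i :=
                pow_le_pow_left₀ (abs_nonneg t) (by linarith [abs_nonneg t]) i
            _ ≤ (1 + |t|) ^ (k + 1) := by
                refine pow_le_pow_right₀ (by linarith [abs_nonneg t]) ?_
                exact Nat.lt_succ_iff.mp (Finset.mem_range.mp hi)
      _ = C1 * (1 + |t|) ^ (k + 1) := by rw [← Finset.sum_mul]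
  -- bounds for the sinh-jacobian factor
  have hs_pos : ∀ t : ℝ, (0:ℝ) < Real.sqrt (1 + t ^ 2) := fun t =>
    Real.sqrt_pos.mpr (by positivity)
  have hs_abs : ∀ t : ℝ, |t| ≤ Real.sqrt (1 + t ^ 2) := by
    intro t
    rw [← Real.sqrt_sq_eq_abs]
    exact Real.sqrt_le_sqrt (by nlinarith)
  have hs_le : ∀ t : ℝ, Real.sqrt (1 + t ^ 2) ≤ 1 + |t| := by
    intro t
    rw [show (1:ℝ) + |t| = Real.sqrt ((1 + |t|) ^ 2) from
      (Real.sqrt_sq (by positivity)).symm]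
    refine Real.sqrt_le_sqrt ?_
    nlinarith [abs_nonneg t, sq_abs t]
  have hs_one : ∀ t : ℝ, (1:ℝ) ≤ Real.sqrt (1 + t ^ 2) := by
    intro t
    have h := Real.sqrt_le_sqrt (show (1:ℝ) ≤ 1 + t ^ 2 by nlinarith)
    simpa using h
  have hD_nonneg : ∀ t : ℝ, 0 ≤ (t + Real.sqrt (1 + t ^ 2)) ^ k / Real.sqrt (1 + t ^ 2) := by
    intro t
    refine div_nonneg (pow_nonneg ?_ k) (hs_pos t).le
    have := hs_abs t
    have := neg_abs_le t
    linarith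
  have hD : ∀ t : ℝ, (t + Real.sqrt (1 + t ^ 2)) ^ k / Real.sqrt (1 + t ^ 2)
      ≤ 2 ^ k * (1 + |t|) ^ k := by
    intro t
    have h0 : 0 ≤ t + Real.sqrt (1 + t ^ 2) := by
      have := hs_abs t; have := neg_abs_le t; linarith
    have h1 : t + Real.sqrt (1 + t ^ 2) ≤ 2 * (1 + |t|) := by
      have := hs_le t; have := le_abs_self t; linarith
    calc (t + Real.sqrt (1 + t ^ 2)) ^ k / Real.sqrt (1 + t ^ 2)
        ≤ (t + Real.sqrt (1 + t ^ 2)) ^ k := by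
          refine div_le_self (pow_nonneg h0 k) (hs_one t)
      _ ≤ (2 * (1 + |t|)) ^ k := pow_le_pow_left₀ h0 h1 k
      _ = 2 ^ k * (1 + |t|) ^ k := mul_pow _ _ _
  -- assemble
  refine Integrable.mono' (integrable_poly_abs_gauss Q hc) ?_ (Eventually.of_forall fun t => ?_)
  · refine Continuous.aestronglyMeasurable ?_
    refine Continuous.mul (Continuous.mul ?_ ?_) ?_
    · exact (Polynomial.continuous_aeval (hermite (k + 1))).comp
        (continuous_const.mul continuous_id)
    · exact Real.continuous_exp.comp (continuous_const.mul (continuous_pow 2))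
    · refine Continuous.div ?_ ?_ (fun t => (hs_pos t).ne') <;>
        [skip; exact Real.continuous_sqrt.comp (continuous_const.add (continuous_pow 2))]
      exact (continuous_id.add
        (Real.continuous_sqrt.comp (continuous_const.add (continuous_pow 2)))).pow k
  · have he : (0:ℝ) < Real.exp (-(b ^ 2 / 2) * t ^ 2) := Real.exp_pos _
    have hQval : aeval |t| Q = C1 * 2 ^ k * (1 + |t|) ^ (2 * k + 1) := by
      simp [hQ]
    have hC1_nonneg : 0 ≤ C1 := by
      rw [hC1]; exact Finset.sum_nonneg fun i _ => by positivity
    rw [Real.norm_eq_abs, abs_mul, abs_mul, abs_of_pos he, abs_of_nonneg (hD_nonneg t), hQval]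
    calc |(aeval (b * t) (hermite (k + 1)) : ℝ)| * Real.exp (-(b ^ 2 / 2) * t ^ 2) *
          ((t + Real.sqrt (1 + t ^ 2)) ^ k / Real.sqrt (1 + t ^ 2))
        ≤ C1 * (1 + |t|) ^ (k + 1) * Real.exp (-(b ^ 2 / 2) * t ^ 2) *
            (2 ^ k * (1 + |t|) ^ k) := by
          refine mul_le_mul ?_ (hD t) (hD_nonneg t) (by positivity)
          exact mul_le_mul_of_nonneg_right (hH t) he.le
      _ = C1 * 2 ^ k * (1 + |t|) ^ (2 * k + 1) * Real.exp (-(b ^ 2 / 2) * t ^ 2) := by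
          rw [show 2 * k + 1 = (k + 1) + k by ring, pow_add]
          ring

end HermiteSinhAux

open HermiteSinhAux Polynomial

/-- Vanishing of the period of the Schwartz form `φ^U_{1,[k]}` over the hyperbolic line
against a timelike vector: for every `k ≥ 0` and real `b ≠ 0`,
`∫_{−∞}^{∞} He_{k+1}(b·sinh r)·e^{−(b²/2)·sinh²r}·e^{kr} dr = 0`, where `He_n` is the
probabilists' Hermite polynomial.  Hence the `O(1,1)` theta lift has no negative Fourier
coefficients, i.e. it is holomorphic. -/
theorem hermite_sinh_integral_vanishes (k : ℕ) (b : ℝ) (hb : b ≠ 0) :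
    MeasureTheory.Integrable (fun r : ℝ =>
      (Polynomial.aeval (b * Real.sinh r) (Polynomial.hermite (k + 1)) : ℝ) *
        Real.exp (-(b ^ 2 / 2) * Real.sinh r ^ 2) * Real.exp (k * r)) ∧
    (∫ r : ℝ,
        (Polynomial.aeval (b * Real.sinh r) (Polynomial.hermite (k + 1)) : ℝ) *
          Real.exp (-(b ^ 2 / 2) * Real.sinh r ^ 2) * Real.exp (k * r)) = 0 := by
  set f : ℝ → ℝ := fun r =>
    (Polynomial.aeval (b * Real.sinh r) (Polynomial.hermite (k + 1)) : ℝ) *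
      Real.exp (-(b ^ 2 / 2) * Real.sinh r ^ 2) * Real.exp (k * r) with hf
  set ψ : ℝ → ℝ := fun t =>
    (Polynomial.aeval (b * t) (Polynomial.hermite (k + 1)) : ℝ) *
      Real.exp (-(b ^ 2 / 2) * t ^ 2) *
      ((t + Real.sqrt (1 + t ^ 2)) ^ k / Real.sqrt (1 + t ^ 2)) with hψ
  have hsq : ∀ r : ℝ, Real.sqrt (1 + Real.sinh r ^ 2) = Real.cosh r := by
    intro r
    rw [← Real.cosh_sq']
    exact Real.sqrt_sq (Real.cosh_pos r).le
  have hfeq : ∀ r : ℝ, Real.cosh r * ψ (Real.sinh r) = f r := by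
    intro r
    simp only [hψ, hf]
    rw [hsq r, Real.sinh_add_cosh, ← Real.exp_nat_mul]
    field_simp [(Real.cosh_pos r).ne']
  have hfint : MeasureTheory.Integrable f := by
    have h := (integrable_sinh_iff ψ).mpr (integrable_psi k b hb)
    exact h.congr (MeasureTheory.ae_of_all _ fun r => hfeq r)
  refine ⟨hfint, ?_⟩
  have hnegint : MeasureTheory.Integrable (fun r : ℝ => f (-r)) := hfint.comp_neg
  obtain ⟨P, hPdeg, hPkey⟩ := exists_P k
  set ψ₂ : ℝ → ℝ := fun t =>
    (Polynomial.aeval (b * t) (Polynomial.hermite (k + 1)) : ℝ) *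
      Real.exp (-(b ^ 2 / 2) * t ^ 2) * Polynomial.aeval t P with hψ₂
  have hsym : ∀ r : ℝ, (f r + f (-r)) / 2 = Real.cosh r * ψ₂ (Real.sinh r) := by
    intro r
    have hc2 : Real.cosh r ^ 2 = 1 + Real.sinh r ^ 2 := Real.cosh_sq' r
    have key := hPkey (Real.sinh r) (Real.cosh r) hc2
    have e1 : (Real.sinh r + Real.cosh r) ^ k = Real.exp ((k : ℝ) * r) := by
      rw [Real.sinh_add_cosh, ← Real.exp_nat_mul]
    have e2 : (Real.sinh r - Real.cosh r) ^ k = (-1) ^ k * Real.exp ((k : ℝ) * -r) := by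
      rw [Real.sinh_sub_cosh, show (-(Real.exp (-r))) ^ k = (-1) ^ k * Real.exp (-r) ^ k by
        rw [neg_pow], ← Real.exp_nat_mul]
    have key2 : Real.exp ((k : ℝ) * r) - (-1) ^ k * Real.exp ((k : ℝ) * -r)
        = 2 * Real.cosh r * Polynomial.aeval (Real.sinh r) P := by
      rw [← e1, ← e2]; exact key
    have e3 : f (-r) = (-1) ^ (k + 1) *
        (Polynomial.aeval (b * Real.sinh r) (Polynomial.hermite (k + 1)) : ℝ) *
        Real.exp (-(b ^ 2 / 2) * Real.sinh r ^ 2) * Real.exp ((k : ℝ) * -r) := by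
      simp only [hf, Real.sinh_neg]
      rw [show b * -Real.sinh r = -(b * Real.sinh r) by ring, hermite_aeval_neg,
        neg_sq]
    rw [e3]
    simp only [hψ₂, hf]
    linear_combination ((Polynomial.aeval (b * Real.sinh r) (Polynomial.hermite (k + 1)) : ℝ) *
      Real.exp (-(b ^ 2 / 2) * Real.sinh r ^ 2) / 2) * key2
  calc (∫ r : ℝ, f r) = ((∫ r : ℝ, f r) + (∫ r : ℝ, f (-r))) / 2 := by
        rw [MeasureTheory.integral_neg_eq_self f]
        ring
    _ = ∫ r : ℝ, (f r + f (-r)) / 2 := by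
        rw [MeasureTheory.integral_div, MeasureTheory.integral_add hfint hnegint]
    _ = ∫ r : ℝ, Real.cosh r * ψ₂ (Real.sinh r) :=
        MeasureTheory.integral_congr_ae (MeasureTheory.ae_of_all _ fun r => hsym r)
    _ = ∫ t : ℝ, ψ₂ t := integral_sinh ψ₂
    _ = 0 := ortho_poly b hb (k + 1) P (lt_of_le_of_lt hPdeg (Nat.lt_succ_self k))
end
end

section
/- For every n ∈ ℕ and all complex numbers x, y: ∑_{j=0}^{n} binom(n, j) · (−i)^j · He_{n−j}(x) · He_j(y) = (x − i·y)^n. Equivalently, with physicists' Hermite polynomials, ∑_{j=0}^{n} binom(n, j)·(−i)^j·H_{n−j}(x)·H_j(y) = 2^n·(x − i·y)^n. (This Hermite addition identity is the computation relating the Kudla–Millson theta kernel φ^V_{1,[k]} paired against the holomorphic form η_f to Shintani's scalar-valued theta kernel with Schwartz function (x₁ + i x₂)^{k+1}·φ₀.) -/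
noncomputable section



open Polynomial in
lemma deriv_hermite (n : ℕ) :
    derivative (hermite n) = (n : Polynomial ℤ) * hermite (n - 1) := by
  induction n using Nat.strong_induction_on with
  | _ n ih =>
    match n with
    | 0 => simp [hermite_zero]
    | 1 => simp [hermite_one, hermite_zero]
    | (m+2) =>
      rw [hermite_succ (m+1), derivative_sub, derivative_mul, derivative_X, one_mul,
        ih (m+1) (by omega), derivative_mul]
      simp only [Nat.add_sub_cancel, Nat.add_one_sub_one, Polynomial.derivative_natCast,
        zero_mul, zero_add]
      rw [ih m (by omega), hermite_succ m, ih m (by omega)]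
      push_cast
      ring

open Finset in
lemma key_sum (x y z : ℂ) (hz : z ^ 2 = -1) (h k : ℕ → ℂ)
    (h0 : h 0 = 1) (k0 : k 0 = 1)
    (hh : ∀ m, h (m + 1) = x * h m - m * h (m - 1))
    (hk : ∀ m, k (m + 1) = y * k m - m * k (m - 1)) (n : ℕ) :
    ∑ j ∈ range (n + 1), (n.choose j : ℂ) * z ^ j * h (n - j) * k j = (x + z * y) ^ n := by
  induction n with
  | zero => simp [h0, k0]
  | succ n ih =>
    set S := ∑ j ∈ range (n + 1), (n.choose j : ℂ) * z ^ j * h (n - j) * k j with hS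
    have pascal : ∀ f : ℕ → ℂ,
        ∑ j ∈ range (n + 2), ((n + 1).choose j : ℂ) * f j
          = ∑ j ∈ range (n + 1), (n.choose j : ℂ) * f j
            + ∑ j ∈ range (n + 1), (n.choose j : ℂ) * f (j + 1) := by
      intro f
      rw [Finset.sum_range_succ' (fun j => ((n + 1).choose j : ℂ) * f j) (n + 1)]
      have : ∀ j ∈ range (n + 1), ((n + 1).choose (j + 1) : ℂ) * f (j + 1)
          = (n.choose j : ℂ) * f (j + 1) + (n.choose (j + 1) : ℂ) * f (j + 1) := by
        intro j _
        rw [Nat.choose_succ_succ]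
        push_cast
        ring
      rw [Finset.sum_congr rfl this, Finset.sum_add_distrib]
      have e2 : ∑ j ∈ range (n + 1), (n.choose (j + 1) : ℂ) * f (j + 1) + ((n + 1).choose 0 : ℂ) * f 0
          = ∑ j ∈ range (n + 1), (n.choose j : ℂ) * f j := by
        rw [Finset.sum_range_succ' (fun j => (n.choose j : ℂ) * f j) n,
          Finset.sum_range_succ]
        simp
      linear_combination e2
    have main : ∑ j ∈ range (n + 2), ((n + 1).choose j : ℂ) * z ^ j * h (n + 1 - j) * k j
        = (x + z * y) * S := by
      have := pascal (fun j => z ^ j * h (n + 1 - j) * k j)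
      simp only [← mul_assoc] at this
      rw [this]
      -- A part
      have hA : ∑ j ∈ range (n + 1), (n.choose j : ℂ) * z ^ j * h (n + 1 - j) * k j
          = x * S - ∑ j ∈ range (n + 1), (n.choose j : ℂ) * ((n - j : ℕ) : ℂ) * z ^ j * h (n - j - 1) * k j := by
        rw [hS, Finset.mul_sum, ← Finset.sum_sub_distrib]
        refine Finset.sum_congr rfl fun j hj => ?_
        have hj' : j ≤ n := by simpa [Nat.lt_succ_iff] using hj
        rw [show n + 1 - j = (n - j) + 1 by omega, hh (n - j)]
        ring
      have hB : ∑ j ∈ range (n + 1), (n.choose j : ℂ) * z ^ (j + 1) * h (n + 1 - (j + 1)) * k (j + 1)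
          = z * y * S - ∑ j ∈ range (n + 1), (n.choose j : ℂ) * (j : ℂ) * z ^ (j + 1) * h (n - j) * k (j - 1) := by
        rw [hS, Finset.mul_sum, ← Finset.sum_sub_distrib]
        refine Finset.sum_congr rfl fun j hj => ?_
        rw [hk j, show n + 1 - (j + 1) = n - j by omega]
        ring
      have hTV : ∑ j ∈ range (n + 1), (n.choose j : ℂ) * (j : ℂ) * z ^ (j + 1) * h (n - j) * k (j - 1)
          = - ∑ j ∈ range (n + 1), (n.choose j : ℂ) * ((n - j : ℕ) : ℂ) * z ^ j * h (n - j - 1) * k j := by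
        rw [Finset.sum_range_succ' (fun j => (n.choose j : ℂ) * (j : ℂ) * z ^ (j + 1) * h (n - j) * k (j - 1)) n,
          Finset.sum_range_succ (fun j => (n.choose j : ℂ) * ((n - j : ℕ) : ℂ) * z ^ j * h (n - j - 1) * k j) n]
        simp only [Nat.cast_zero, mul_zero, zero_mul, add_zero, Nat.sub_self, mul_comm]
        rw [← Finset.sum_neg_distrib]
        refine Finset.sum_congr rfl fun j hj => ?_
        have hj' : j < n := by simpa using hj
        have hcc : ((n.choose (j + 1) : ℂ)) * ((j : ℂ) + 1) = (n.choose j : ℂ) * ((n - j : ℕ) : ℂ) := by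
          have := Nat.choose_succ_right_eq n j
          have := congrArg (Nat.cast : ℕ → ℂ) this
          push_cast at this
          linear_combination this
        have hz' : z ^ (j + 1 + 1) = - z ^ j := by
          rw [show j + 1 + 1 = j + 2 by ring, pow_add, hz]; ring
        rw [show n - (j + 1) = n - j - 1 by omega, hz']
        push_cast
        linear_combination (- z ^ j * h (n - j - 1) * k j) * hcc
      rw [hA, hB, hTV]
      ring
    rw [show n + 1 + 1 = n + 2 from rfl] at *
    calc ∑ j ∈ range (n + 2), (((n+1).choose j : ℂ)) * z ^ j * h (n + 1 - j) * k j
        = (x + z * y) * S := main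
      _ = (x + z * y) ^ (n + 1) := by rw [ih]; ring

/-- Hermite addition identity: for every `n` and all complex `x, y`,
`∑_{j=0}^{n} C(n,j)·(−i)^j·He_{n−j}(x)·He_j(y) = (x − iy)^n`, where `He_n` is the
probabilists' Hermite polynomial.  This relates the Kudla–Millson theta kernel paired
against `η_f` to Shintani's scalar-valued theta kernel. -/
theorem hermite_addition_identity (n : ℕ) (x y : ℂ) :
    ∑ j ∈ Finset.range (n + 1),
        (Nat.choose n j : ℂ) * (-Complex.I) ^ j *
          (Polynomial.aeval x (Polynomial.hermite (n - j)) : ℂ) *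
          (Polynomial.aeval y (Polynomial.hermite j) : ℂ) =
      (x - Complex.I * y) ^ n := by
  have hrec : ∀ (t : ℂ) (m : ℕ), (Polynomial.aeval t (Polynomial.hermite (m + 1)) : ℂ)
      = t * Polynomial.aeval t (Polynomial.hermite m)
        - m * Polynomial.aeval t (Polynomial.hermite (m - 1)) := by
    intro t m
    rw [Polynomial.hermite_succ, deriv_hermite]
    simp
  have := key_sum x y (-Complex.I) (by rw [neg_sq, Complex.I_sq])
    (fun m => (Polynomial.aeval x (Polynomial.hermite m) : ℂ))
    (fun m => (Polynomial.aeval y (Polynomial.hermite m) : ℂ))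
    (by simp [Polynomial.hermite_zero]) (by simp [Polynomial.hermite_zero])
    (hrec x) (hrec y) n
  rw [this]
  ring_nf
end
end
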